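/- arXiv:1001.0991 — 3 statements merged into one kernel-verified Lean document; each statement's English description precedes it below -/
import Mathlib

section
/- Let τ ∈ ℂ with Im(τ) > 0, let n ≥ 2 be an integer, and let z ∈ S(τ) (note S(nτ) = S(τ)). Then F(z; nτ) = (1/n) · Σ_{k=0}^{n−1} F( (z + πi(n−2k−1))/n ; τ ), where each argument (z + πi(n−2k−1))/n lies in S(τ). -/
open MeasureTheory

noncomputable section

/-- The strip `S(τ) = {z : |Re(z ⋅ conj τ)| < π Im τ}`. -/
def stripS (τ : ℂ) : Set ℂ := {z : ℂ | |(z * (starRingEnd ℂ) τ).re| < Real.pi * τ.im}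

/-- The parallelogram `P(τ) = S(τ) ∩ {z : |Im z| < π Im τ}`. -/
def parP (τ : ℂ) : Set ℂ := stripS τ ∩ {z : ℂ | |z.im| < Real.pi * τ.im}

/-- The function `F(z;τ) = ∫_ℝ dx / ((1 + e^{z + iτx})(1 + e^x))`. -/
def Fk (z τ : ℂ) : ℂ :=
  ∫ x : ℝ, 1 / ((1 + Complex.exp (z + Complex.I * τ * x)) * (1 + Complex.exp (x : ℂ)))


open Complex Set Finset

lemma aux_ne2 (x : ℝ) : 1 + Complex.exp (x : ℂ) ≠ 0 := by
  intro h
  have h1 : (1 + Complex.exp (x:ℂ)).re = 0 := by rw [h]; simp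
  rw [Complex.add_re, Complex.one_re, ← Complex.ofReal_exp, Complex.ofReal_re] at h1
  nlinarith [Real.exp_pos x]

lemma aux_ne (τ : ℂ) (hτ : 0 < τ.im) (w : ℂ) (hw : w ∈ stripS τ) (x : ℝ) :
    1 + Complex.exp (w + Complex.I * τ * x) ≠ 0 := by
  intro h
  have h1 : Complex.exp (w + Complex.I * τ * x) = Complex.exp (Real.pi * Complex.I) := by
    rw [Complex.exp_pi_mul_I]; linear_combination h
  rw [Complex.exp_eq_exp_iff_exists_int] at h1
  obtain ⟨m, hm⟩ := h1
  have h2 := congrArg (fun v => (v * (starRingEnd ℂ) τ).re) hm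
  simp only [Complex.add_re, Complex.mul_re, Complex.mul_im, Complex.I_re, Complex.I_im,
    Complex.conj_re, Complex.conj_im, Complex.ofReal_re, Complex.ofReal_im,
    Complex.intCast_re, Complex.intCast_im, Complex.add_im, Complex.one_re,
    Complex.re_ofNat, Complex.im_ofNat] at h2
  ring_nf at h2
  have hw' : |(w * (starRingEnd ℂ) τ).re| < Real.pi * τ.im := hw
  rw [Complex.mul_re, Complex.conj_re, Complex.conj_im] at hw'
  have hm1 : (1 : ℝ) ≤ |(2 * (m:ℝ) + 1)| := by
    have : (2*m+1 : ℤ) ≠ 0 := by omega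
    have h3 := Int.one_le_abs this
    have h4 : (1:ℝ) ≤ |((2*m+1 : ℤ) : ℝ)| := by exact_mod_cast (by exact_mod_cast h3 : ((1:ℤ):ℝ) ≤ |(2*m+1:ℤ)|)
    push_cast at h4
    exact h4
  have hπ := Real.pi_pos
  rcases abs_cases (2 * (m:ℝ) + 1) with ⟨he, _⟩ | ⟨he, _⟩ <;>
    rcases abs_cases (w.re * τ.re - w.im * -τ.im) with ⟨ha, _⟩ | ⟨ha, _⟩ <;>
    nlinarith [hw', h2]


lemma exp_on_Iic (C b L : ℝ) (hb : 0 < b) :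
    IntegrableOn (fun x : ℝ => C * Real.exp (b * x)) (Iic L) := by
  rw [← (Measure.measurePreserving_neg (volume : Measure ℝ)).integrableOn_comp_preimage
      (Homeomorph.neg ℝ).measurableEmbedding]
  simp only [Function.comp_def, neg_preimage, neg_Iic]
  refine (integrableOn_Ici_iff_integrableOn_Ioi (by exact enorm_ne_top)).2 ?_
  have := (exp_neg_integrableOn_Ioi (-L) hb).const_mul C
  simpa [mul_neg, neg_mul, IntegrableOn] using this

lemma aux_int (τ : ℂ) (hτ : 0 < τ.im) (w : ℂ) (hw : w ∈ stripS τ) :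
    Integrable (fun x : ℝ =>
      1 / ((1 + Complex.exp (w + Complex.I * τ * x)) * (1 + Complex.exp (x : ℂ)))) := by
  set b := τ.im with hbdef
  set f := fun x : ℝ =>
      1 / ((1 + Complex.exp (w + Complex.I * τ * x)) * (1 + Complex.exp (x : ℂ))) with hf
  have hcont : Continuous f := by
    apply continuous_const.div
    · fun_prop
    · intro x
      exact mul_ne_zero (aux_ne τ hτ w hw x) (aux_ne2 x)
  have hre : ∀ x : ℝ, (w + Complex.I * τ * x).re = w.re - b * x := by
    intro x
    simp [Complex.add_re, Complex.mul_re, Complex.mul_im, Complex.I_re, Complex.I_im,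
      Complex.ofReal_re, Complex.ofReal_im]
    ring
  have habs : ∀ x : ℝ, ‖Complex.exp (w + Complex.I * τ * x)‖ = Real.exp (w.re - b * x) := by
    intro x
    rw [Complex.norm_exp, hre]
  have hb2 : ∀ x : ℝ, ‖1 + Complex.exp (x : ℂ)‖ = 1 + Real.exp x := by
    intro x
    rw [← Complex.ofReal_one, ← Complex.ofReal_exp, ← Complex.ofReal_add,
      Complex.norm_real, Real.norm_eq_abs, abs_of_pos (by positivity)]
  have hnorm : ∀ x : ℝ, ‖f x‖ =
      1 / (‖1 + Complex.exp (w + Complex.I * τ * x)‖ * (1 + Real.exp x)) := by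
    intro x
    rw [hf]
    simp only [norm_div, norm_one, norm_mul, hb2]
  set L := (w.re - Real.log 2) / b with hL
  set R := (w.re + Real.log 2) / b with hR
  have hlog2 : (0:ℝ) < Real.log 2 := Real.log_pos (by norm_num)
  have hLR : L ≤ R := by
    rw [hL, hR]
    gcongr
    linarith
  -- piece 3 : Ici R
  have u3 : IntegrableOn f (Ici R) := by
    have g3 : IntegrableOn (fun x => 2 * Real.exp (-x)) (Ici R) := by
      refine (integrableOn_Ici_iff_integrableOn_Ioi (by exact enorm_ne_top)).2 ?_
      have := (exp_neg_integrableOn_Ioi R one_pos).const_mul 2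
      simpa [neg_mul, one_mul, IntegrableOn] using this
    apply Integrable.mono' g3 (hcont.aestronglyMeasurable.restrict)
    · filter_upwards [ae_restrict_mem measurableSet_Ici] with x hx
      rw [Set.mem_Ici, hR, div_le_iff₀ hτ] at hx
      have hx' : w.re - b * x ≤ -Real.log 2 := by linarith [hx]
      have hEle : Real.exp (w.re - b * x) ≤ 1 / 2 := by
        calc Real.exp (w.re - b * x) ≤ Real.exp (-Real.log 2) := Real.exp_le_exp.2 hx'
        _ = 1 / 2 := by rw [Real.exp_neg, Real.exp_log (by norm_num)]; norm_num
      have ha : (1:ℝ) / 2 ≤ ‖1 + Complex.exp (w + Complex.I * τ * x)‖ := by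
        have := norm_sub_le (1 + Complex.exp (w + Complex.I * τ * x))
          (Complex.exp (w + Complex.I * τ * x))
        simp only [add_sub_cancel_right, norm_one] at this
        rw [habs] at this
        linarith
      rw [hnorm]
      have hden : Real.exp x / 2 ≤
          ‖1 + Complex.exp (w + Complex.I * τ * x)‖ * (1 + Real.exp x) := by
        have h1 : (0:ℝ) < 1 + Real.exp x := by positivity
        nlinarith [Real.exp_pos x, ha]
      calc 1 / (‖1 + Complex.exp (w + Complex.I * τ * x)‖ * (1 + Real.exp x))
          ≤ 1 / (Real.exp x / 2) := by
            apply one_div_le_one_div_of_le (by positivity) hden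
        _ = 2 * Real.exp (-x) := by rw [Real.exp_neg]; field_simp
  -- piece 1 : Iic L
  have u1 : IntegrableOn f (Iic L) := by
    apply Integrable.mono' (g := fun x => 2 * Real.exp (-w.re) * Real.exp (b * x))
      ((exp_on_Iic (2 * Real.exp (-w.re)) b L hτ))
      (hcont.aestronglyMeasurable.restrict)
    filter_upwards [ae_restrict_mem measurableSet_Iic] with x hx
    rw [Set.mem_Iic, hL, le_div_iff₀ hτ] at hx
    have hx' : Real.log 2 ≤ w.re - b * x := by linarith [hx]
    have hEge : (2:ℝ) ≤ Real.exp (w.re - b * x) := by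
      calc (2:ℝ) = Real.exp (Real.log 2) := (Real.exp_log (by norm_num)).symm
      _ ≤ Real.exp (w.re - b * x) := Real.exp_le_exp.2 hx'
    have ha : Real.exp (w.re - b * x) / 2 ≤
        ‖1 + Complex.exp (w + Complex.I * τ * x)‖ := by
      have h3 := norm_sub_le (1 + Complex.exp (w + Complex.I * τ * x)) 1
      simp only [add_sub_cancel_left, norm_one] at h3
      rw [habs] at h3
      linarith
    rw [hnorm]
    have hden : Real.exp (w.re - b * x) / 2 ≤
        ‖1 + Complex.exp (w + Complex.I * τ * x)‖ * (1 + Real.exp x) := by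
      nlinarith [Real.exp_pos x, ha, Real.exp_pos (w.re - b*x)]
    calc 1 / (‖1 + Complex.exp (w + Complex.I * τ * x)‖ * (1 + Real.exp x))
        ≤ 1 / (Real.exp (w.re - b * x) / 2) :=
          one_div_le_one_div_of_le (by positivity) hden
      _ = 2 * Real.exp (-w.re) * Real.exp (b * x) := by
          rw [one_div_div, Real.exp_sub, Real.exp_neg]
          field_simp
  -- piece 2 : Icc L R
  have u2 : IntegrableOn f (Icc L R) := hcont.integrableOn_Icc
  have := (u1.union u2).union u3
  rw [Iic_union_Icc_eq_Iic hLR, Iic_union_Ici] at this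
  exact integrableOn_univ.mp this


lemma key_sum (n : ℕ) (hn : 2 ≤ n) (t : ℂ) (ht : 1 + t ^ n ≠ 0) :
    ∑ k ∈ Finset.range n,
      1 / (1 + Complex.exp (↑Real.pi * Complex.I * ((n : ℂ) - 2 * k - 1) / n) * t)
      = n / (1 + t ^ n) := by
  have hn0 : (n : ℂ) ≠ 0 := Nat.cast_ne_zero.2 (by omega)
  set c : ℕ → ℂ := fun k => Complex.exp (↑Real.pi * Complex.I * ((n : ℂ) - 2 * k - 1) / n)
    with hc
  have hcn : ∀ k : ℕ, (-(c k * t)) ^ n = -(t ^ n) := by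
    intro k
    rw [neg_pow, mul_pow, hc]
    rw [← Complex.exp_nat_mul]
    rw [show (n : ℂ) * (↑Real.pi * Complex.I * ((n : ℂ) - 2 * k - 1) / n)
        = (n : ℂ) * (↑Real.pi * Complex.I) + -((k : ℂ) * (2 * ↑Real.pi * Complex.I))
          + -(↑Real.pi * Complex.I) by field_simp; ring]
    rw [Complex.exp_add, Complex.exp_add, Complex.exp_neg, Complex.exp_neg,
      Complex.exp_nat_mul, Complex.exp_nat_mul_two_pi_mul_I, Complex.exp_pi_mul_I]
    have h11 : ((-1 : ℂ)) ^ n * ((-1 : ℂ)) ^ n = 1 := by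
      rw [← mul_pow]; norm_num
    linear_combination (-(t ^ n)) * h11
  have hterm : ∀ k ∈ Finset.range n,
      1 / (1 + c k * t) = (∑ m ∈ Finset.range n, (-(c k * t)) ^ m) / (1 + t ^ n) := by
    intro k _
    have hgeom : (1 + c k * t) * ∑ m ∈ Finset.range n, (-(c k * t)) ^ m = 1 + t ^ n := by
      have hg := geom_sum_mul (-(c k * t)) n
      linear_combination -hg - hcn k
    have hne : (1 + c k * t) ≠ 0 := by
      intro h0
      rw [h0, zero_mul] at hgeom
      exact ht hgeom.symm
    rw [div_eq_div_iff hne ht]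
    linear_combination -hgeom
  rw [Finset.sum_congr rfl hterm, ← Finset.sum_div]
  congr 1
  rw [Finset.sum_comm]
  have hsumk : ∀ m ∈ Finset.range n,
      ∑ k ∈ Finset.range n, (-(c k * t)) ^ m
        = (-t) ^ m * (if m = 0 then (n : ℂ) else 0) := by
    intro m hm
    have hsplit : ∀ k, (-(c k * t)) ^ m = (-t) ^ m * (c k) ^ m := by
      intro k; rw [show -(c k * t) = (-t) * c k by ring, mul_pow]
    simp only [hsplit, ← Finset.mul_sum]
    congr 1
    rcases eq_or_ne m 0 with rfl | hm0
    · simp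
    · rw [if_neg hm0]
      have hr : ∀ k : ℕ, (c k) ^ m
          = Complex.exp (↑Real.pi * Complex.I * m * ((n : ℂ) - 1) / n)
            * (Complex.exp (-(2 * ↑Real.pi * Complex.I * m / n))) ^ k := by
        intro k
        rw [hc, ← Complex.exp_nat_mul, ← Complex.exp_nat_mul, ← Complex.exp_add]
        congr 1
        field_simp
        ring
      simp only [hr, ← Finset.mul_sum]
      have hr1 : Complex.exp (-(2 * ↑Real.pi * Complex.I * m / n)) ≠ 1 := by
        intro hone
        rw [Complex.exp_eq_one_iff] at hone
        obtain ⟨j, hj⟩ := hone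
        have hmn : m < n := Finset.mem_range.1 hm
        have hm1 : 1 ≤ m := Nat.one_le_iff_ne_zero.2 hm0
        rw [show -(2 * (Real.pi:ℂ) * Complex.I * m / n)
            = ((-(2 * Real.pi * m / n) : ℝ) : ℂ) * Complex.I by push_cast; ring,
          show (j:ℂ) * (2 * (Real.pi:ℂ) * Complex.I)
            = ((2 * Real.pi * j : ℝ) : ℂ) * Complex.I by push_cast; ring] at hj
        have him := congrArg Complex.im hj
        simp only [Complex.mul_im, Complex.I_im, Complex.I_re, Complex.ofReal_re,
          Complex.ofReal_im, mul_one, mul_zero, add_zero, zero_add] at him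
        have hπ := Real.pi_pos
        have hnR : (0:ℝ) < (n:ℝ) := by positivity
        have hmR : (1:ℝ) ≤ (m:ℝ) := by exact_mod_cast hm1
        have hmnR : (m:ℝ) < (n:ℝ) := by exact_mod_cast hmn
        have h4 := congrArg (fun y : ℝ => y * n) him
        simp only [neg_mul] at h4
        rw [div_mul_cancel₀ _ (ne_of_gt hnR)] at h4
        have h3 : -(m:ℝ) = (j:ℝ) * n := by
          have h2π : (2*Real.pi) ≠ 0 := by positivity
          apply mul_right_cancel₀ h2π
          linear_combination h4
        rcases le_or_gt 0 j with hj0 | hj0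
        · have : (0:ℝ) ≤ (j:ℝ) := by exact_mod_cast hj0
          nlinarith
        · have hj1 : j ≤ -1 := by omega
          have : (j:ℝ) ≤ -1 := by exact_mod_cast hj1
          nlinarith
      rw [geom_sum_eq hr1]
      have hrn : (Complex.exp (-(2 * ↑Real.pi * Complex.I * m / n))) ^ n = 1 := by
        rw [← Complex.exp_nat_mul,
          show (n : ℂ) * (-(2 * ↑Real.pi * Complex.I * m / n))
            = -((m : ℂ) * (2 * ↑Real.pi * Complex.I)) by field_simp,
          Complex.exp_neg, Complex.exp_nat_mul_two_pi_mul_I]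
        simp
      rw [hrn]
      simp
  rw [Finset.sum_congr rfl hsumk, Finset.sum_eq_single 0 (by intro b _ hb; simp [hb])
    (by intro h; exact absurd (Finset.mem_range.2 (by omega)) h)]
  simp


lemma mem_strip_mul (τ : ℂ) (hτ : 0 < τ.im) (n : ℕ) (hn : 1 ≤ n) (z : ℂ)
    (hz : z ∈ stripS τ) : z ∈ stripS ((n : ℂ) * τ) := by
  have hz' : |(z * (starRingEnd ℂ) τ).re| < Real.pi * τ.im := hz
  have hnR : (0:ℝ) < (n:ℝ) := by exact_mod_cast Nat.pos_of_ne_zero (by omega)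
  show |(z * (starRingEnd ℂ) ((n:ℂ) * τ)).re| < Real.pi * ((n:ℂ) * τ).im
  have h1 : (z * (starRingEnd ℂ) ((n:ℂ) * τ)).re = (n:ℝ) * (z * (starRingEnd ℂ) τ).re := by
    rw [map_mul, map_natCast, show z * ((n:ℂ) * (starRingEnd ℂ) τ) = (n:ℂ) * (z * (starRingEnd ℂ) τ) by ring]
    simp [Complex.mul_re]
  have h2 : ((n:ℂ) * τ).im = (n:ℝ) * τ.im := by simp [Complex.mul_im]
  rw [h1, h2, abs_mul, abs_of_pos hnR]
  calc (n:ℝ) * |(z * (starRingEnd ℂ) τ).re| < (n:ℝ) * (Real.pi * τ.im) := by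
        exact (mul_lt_mul_iff_right₀ hnR).2 hz'
    _ = Real.pi * ((n:ℝ) * τ.im) := by ring

lemma mem_strip_shift (τ : ℂ) (hτ : 0 < τ.im) (n : ℕ) (hn : 2 ≤ n) (z : ℂ)
    (hz : z ∈ stripS τ) (k : ℕ) (hk : k < n) :
    (z + ↑Real.pi * Complex.I * ((n : ℂ) - 2 * k - 1)) / n ∈ stripS τ := by
  have hz' : |(z * (starRingEnd ℂ) τ).re| < Real.pi * τ.im := hz
  have hnR : (0:ℝ) < (n:ℝ) := by positivity
  set α : ℝ := (n:ℝ) - 2 * k - 1 with hα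
  have hcast : ((n : ℂ) - 2 * k - 1) = ((α : ℝ) : ℂ) := by rw [hα]; push_cast; ring
  show |((z + ↑Real.pi * Complex.I * ((n : ℂ) - 2 * k - 1)) / n * (starRingEnd ℂ) τ).re| <
    Real.pi * τ.im
  have h1 : ((z + ↑Real.pi * Complex.I * ((n : ℂ) - 2 * k - 1)) / n * (starRingEnd ℂ) τ).re
      = ((z * (starRingEnd ℂ) τ).re + Real.pi * α * τ.im) / (n:ℝ) := by
    rw [hcast, div_mul_eq_mul_div, ← Complex.ofReal_natCast, Complex.div_ofReal_re]
    congr 1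
    rw [add_mul, Complex.add_re]
    congr 1
    simp [Complex.mul_re, Complex.mul_im, Complex.conj_re, Complex.conj_im]
  rw [h1, abs_div, abs_of_pos hnR, div_lt_iff₀ hnR]
  have hαbound : |α| ≤ (n:ℝ) - 1 := by
    rw [hα, abs_le]
    have hkR : (k:ℝ) ≤ (n:ℝ) - 1 := by
      have : (k:ℝ) < (n:ℝ) := by exact_mod_cast hk
      have h2 : ((k:ℕ):ℝ) + 1 ≤ ((n:ℕ):ℝ) := by exact_mod_cast Nat.succ_le_of_lt hk
      linarith
    have hk0 : (0:ℝ) ≤ (k:ℝ) := Nat.cast_nonneg k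
    constructor <;> nlinarith
  have hπ := Real.pi_pos
  rcases abs_cases ((z * (starRingEnd ℂ) τ).re + Real.pi * α * τ.im) with ⟨he, _⟩ | ⟨he, _⟩ <;>
    rcases abs_cases α with ⟨ha, _⟩ | ⟨ha, _⟩ <;>
    rcases abs_cases ((z * (starRingEnd ℂ) τ).re) with ⟨hb, _⟩ | ⟨hb, _⟩ <;>
    nlinarith [hz', hαbound]

theorem stmt1 (τ : ℂ) (hτ : 0 < τ.im) (n : ℕ) (hn : 2 ≤ n) (z : ℂ) (hz : z ∈ stripS τ) :
    Fk z (n * τ) = (1 / (n : ℂ)) * ∑ k ∈ Finset.range n,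
      Fk ((z + Real.pi * Complex.I * ((n : ℂ) - 2 * k - 1)) / n) τ := by
  have hn0 : (n : ℂ) ≠ 0 := Nat.cast_ne_zero.2 (by omega)
  have hnτ : 0 < ((n:ℂ) * τ).im := by
    have : ((n:ℂ) * τ).im = (n:ℝ) * τ.im := by simp [Complex.mul_im]
    rw [this]; positivity
  have hz' : z ∈ stripS ((n:ℂ) * τ) := mem_strip_mul τ hτ n (by omega) z hz
  set w : ℕ → ℂ := fun k => (z + ↑Real.pi * Complex.I * ((n : ℂ) - 2 * k - 1)) / n with hw
  have hwk : ∀ k, k < n → w k ∈ stripS τ := fun k hk => mem_strip_shift τ hτ n hn z hz k hk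
  have hpoint : ∀ x : ℝ,
      1 / ((1 + Complex.exp (z + Complex.I * ((n:ℂ) * τ) * x)) * (1 + Complex.exp (x:ℂ)))
      = (1 / (n:ℂ)) * ∑ k ∈ Finset.range n,
          1 / ((1 + Complex.exp (w k + Complex.I * τ * x)) * (1 + Complex.exp (x:ℂ))) := by
    intro x
    set t : ℂ := Complex.exp ((z + Complex.I * ((n:ℂ) * τ) * x) / n) with htdef
    have htn : t ^ n = Complex.exp (z + Complex.I * ((n:ℂ) * τ) * x) := by
      rw [htdef, ← Complex.exp_nat_mul]
      congr 1
      field_simp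
    have ht : 1 + t ^ n ≠ 0 := by
      rw [htn]; exact aux_ne ((n:ℂ) * τ) hnτ z hz' x
    have hck : ∀ k : ℕ,
        Complex.exp (↑Real.pi * Complex.I * ((n : ℂ) - 2 * k - 1) / n) * t
          = Complex.exp (w k + Complex.I * τ * x) := by
      intro k
      rw [htdef, ← Complex.exp_add]
      congr 1
      rw [hw]
      field_simp
      ring
    have hks := key_sum n hn t ht
    simp only [hck] at hks
    rw [← htn]
    have hsum : ∑ k ∈ Finset.range n,
        1 / ((1 + Complex.exp (w k + Complex.I * τ * x)) * (1 + Complex.exp (x:ℂ)))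
        = (∑ k ∈ Finset.range n, 1 / (1 + Complex.exp (w k + Complex.I * τ * x)))
            * (1 / (1 + Complex.exp (x:ℂ))) := by
      rw [Finset.sum_mul]
      congr 1
      funext k
      rw [div_mul_div_comm, one_mul]
    rw [hsum, hks, div_mul_div_comm, mul_one, eq_comm, mul_comm,
      div_mul_eq_mul_div, mul_one_div, div_div, mul_comm ((n:ℂ)) ((1 + t ^ n) * (1 + Complex.exp (x:ℂ)))]
    rw [mul_comm (1 + t ^ n) (1 + Complex.exp (x:ℂ))]
    rw [show (1 + Complex.exp (x:ℂ)) * (1 + t ^ n) * (n:ℂ)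
        = (n:ℂ) * ((1 + Complex.exp (x:ℂ)) * (1 + t ^ n)) by ring]
    rw [show (n:ℂ) = (n:ℂ) * 1 from (mul_one _).symm]
    rw [mul_assoc]
    rw [mul_div_mul_left _ _ (by simpa using hn0), one_mul, mul_comm]
  have hFk : Fk z ((n:ℕ) * τ) = ∫ x : ℝ, (1 / (n:ℂ)) * ∑ k ∈ Finset.range n,
      1 / ((1 + Complex.exp (w k + Complex.I * τ * x)) * (1 + Complex.exp (x:ℂ))) := by
    rw [Fk]
    exact integral_congr_ae (Filter.Eventually.of_forall hpoint)
  rw [hFk, integral_const_mul, integral_finset_sum]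
  · rfl
  · intro k hk
    exact aux_int τ hτ (w k) (hwk k (Finset.mem_range.1 hk))

end
end

section
/- Let τ ∈ ℂ with Im(τ) > 0 and let z ∈ S(τ) (note that S(τ) = −S(τ), so −z ∈ S(τ) as well). Then F(z;τ) = F(−z;τ) − iz/τ. -/
open MeasureTheory

noncomputable section

namespace Stmt3Aux
open Complex Metric Filter Set

variable {τ : ℂ}

lemma wre (τ z : ℂ) (x : ℝ) : (z + Complex.I * τ * x).re = z.re - τ.im * x := by
  simp [Complex.add_re, Complex.mul_re, Complex.I_re, Complex.I_im]
  ring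

lemma norm_exp_w (τ z : ℂ) (x : ℝ) :
    ‖Complex.exp (z + Complex.I * τ * x)‖ = Real.exp (z.re - τ.im * x) := by
  rw [Complex.norm_exp, wre]

lemma strip_neg (hz : z ∈ stripS τ) : -z ∈ stripS τ := by
  have := hz
  simp only [stripS, Set.mem_setOf_eq] at this ⊢
  rw [neg_mul, Complex.neg_re, abs_neg]
  exact this

lemma strip_zero (hτ : 0 < τ.im) : (0 : ℂ) ∈ stripS τ := by
  simp [stripS]
  positivity

lemma one_add_ne (hτ : 0 < τ.im) {z : ℂ} (hz : z ∈ stripS τ) (x : ℝ) :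
    1 + Complex.exp (z + Complex.I * τ * x) ≠ 0 := by
  intro h0
  have hexp : Complex.exp (z + Complex.I * τ * x) = -1 := by linear_combination h0
  have h1 : Complex.exp (z + Complex.I * τ * x - Real.pi * Complex.I) = 1 := by
    rw [Complex.exp_sub, hexp, Complex.exp_pi_mul_I]
    norm_num
  obtain ⟨n, hn⟩ := Complex.exp_eq_one_iff.mp h1
  have hzeq : z = (2 * (n : ℂ) + 1) * Real.pi * Complex.I - Complex.I * τ * x := by
    linear_combination hn
  have hre : (z * (starRingEnd ℂ) τ).re = (2 * (n : ℝ) + 1) * (Real.pi * τ.im) := by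
    rw [hzeq]
    simp [Complex.mul_re, Complex.mul_im, Complex.sub_re, Complex.sub_im, Complex.add_re,
      Complex.add_im, Complex.I_re, Complex.I_im, Complex.conj_re, Complex.conj_im]
    ring
  have habs : (1 : ℝ) ≤ |2 * (n : ℝ) + 1| := by
    have h2 : (2 * n + 1 : ℤ) ≠ 0 := by omega
    have := Int.one_le_abs h2
    have : (1 : ℝ) ≤ |((2 * n + 1 : ℤ) : ℝ)| := by
      rw [← Int.cast_abs]
      exact_mod_cast this
    simpa using this
  have hπ : 0 < Real.pi * τ.im := by positivity
  have := hz
  rw [stripS, Set.mem_setOf_eq, hre, abs_mul, abs_of_pos hπ] at this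
  nlinarith

lemma ball_subset {τ z : ℂ} (hz : z ∈ stripS τ) :
    ∃ ε : ℝ, 0 < ε ∧ Metric.closedBall z ε ⊆ stripS τ := by
  have hd : 0 < Real.pi * τ.im - |(z * (starRingEnd ℂ) τ).re| := by
    have := hz; rw [stripS, Set.mem_setOf_eq] at this; linarith
  set d := Real.pi * τ.im - |(z * (starRingEnd ℂ) τ).re| with hdd
  refine ⟨d / (2 * (‖τ‖ + 1)), by positivity, ?_⟩
  intro w hw
  rw [Metric.mem_closedBall, Complex.dist_eq] at hw
  rw [stripS, Set.mem_setOf_eq]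
  have h1 : |((w - z) * (starRingEnd ℂ) τ).re| ≤ ‖w - z‖ * ‖τ‖ := by
    calc |((w - z) * (starRingEnd ℂ) τ).re| ≤ ‖(w - z) * (starRingEnd ℂ) τ‖ :=
          Complex.abs_re_le_norm _
      _ = ‖w - z‖ * ‖τ‖ := by rw [norm_mul, Complex.norm_conj]
  have h2 : |(w * (starRingEnd ℂ) τ).re| ≤ |(z * (starRingEnd ℂ) τ).re|
      + |((w - z) * (starRingEnd ℂ) τ).re| := by
    have : (w * (starRingEnd ℂ) τ).re = (z * (starRingEnd ℂ) τ).re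
        + ((w - z) * (starRingEnd ℂ) τ).re := by
      rw [← Complex.add_re]; ring_nf
    rw [this]; exact abs_add_le _ _
  have h3 : ‖w - z‖ * ‖τ‖ ≤ d / (2 * (‖τ‖ + 1)) * ‖τ‖ := by
    apply mul_le_mul_of_nonneg_right hw (norm_nonneg _)
  have h4 : d / (2 * (‖τ‖ + 1)) * ‖τ‖ < d := by
    rw [div_mul_eq_mul_div, div_lt_iff₀ (by positivity)]
    nlinarith [norm_nonneg τ]
  linarith

lemma master {τ : ℂ} (hτ : 0 < τ.im) (z₀ : ℂ) (ε : ℝ) (hε : 0 ≤ ε)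
    (hball : Metric.closedBall z₀ ε ⊆ stripS τ) :
    ∃ c K : ℝ, 0 < c ∧ 0 < K ∧ ∀ z ∈ Metric.closedBall z₀ ε, ∀ x : ℝ,
      (c ≤ ‖1 + Complex.exp (z + Complex.I * τ * x)‖) ∧
      (‖Complex.exp (z + Complex.I * τ * x)‖ ≤ K * Real.exp (-(τ.im * x))) ∧
      (x ≤ 0 → ‖(1 + Complex.exp (z + Complex.I * τ * x))⁻¹‖ ≤ K * Real.exp (τ.im * x)) := by
  -- the radius R
  set R : ℝ := (|z₀.re| + ε + Real.log 2) / τ.im with hRdef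
  have hlog2 : 0 < Real.log 2 := Real.log_pos (by norm_num)
  have hRpos : 0 < R := by apply div_pos (by positivity) hτ
  have hRτ : τ.im * R = |z₀.re| + ε + Real.log 2 := by
    rw [hRdef]; field_simp
  -- basic re bounds on the ball
  have hre_mem : ∀ z ∈ Metric.closedBall z₀ ε, z₀.re - ε ≤ z.re ∧ z.re ≤ z₀.re + ε := by
    intro z hzb
    rw [Metric.mem_closedBall, Complex.dist_eq] at hzb
    have h1 : |z.re - z₀.re| ≤ ‖z - z₀‖ := by
      simpa using Complex.abs_re_le_norm (z - z₀)
    have := abs_le.mp (h1.trans hzb)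
    constructor <;> linarith [this.1, this.2]
  -- big norm for x ≤ -R
  have hbig : ∀ z ∈ Metric.closedBall z₀ ε, ∀ x : ℝ, x ≤ -R →
      2 ≤ ‖Complex.exp (z + Complex.I * τ * x)‖ := by
    intro z hzb x hx
    rw [norm_exp_w]
    have h1 := (hre_mem z hzb).1
    have h2 : τ.im * R ≤ τ.im * (-x) := by
      apply mul_le_mul_of_nonneg_left (by linarith) hτ.le
    have : Real.log 2 ≤ z.re - τ.im * x := by
      have : |z₀.re| ≥ -z₀.re := by rw [abs_eq_max_neg]; exact le_max_right _ _
      nlinarith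
    calc (2:ℝ) = Real.exp (Real.log 2) := (Real.exp_log (by norm_num)).symm
      _ ≤ _ := Real.exp_le_exp.mpr this
  -- small norm for x ≥ R
  have hsmall : ∀ z ∈ Metric.closedBall z₀ ε, ∀ x : ℝ, R ≤ x →
      ‖Complex.exp (z + Complex.I * τ * x)‖ ≤ 1/2 := by
    intro z hzb x hx
    rw [norm_exp_w]
    have h1 := (hre_mem z hzb).2
    have h2 : τ.im * R ≤ τ.im * x := by
      apply mul_le_mul_of_nonneg_left hx hτ.le
    have : z.re - τ.im * x ≤ -Real.log 2 := by
      have : |z₀.re| ≥ z₀.re := le_abs_self _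
      nlinarith
    calc Real.exp (z.re - τ.im * x) ≤ Real.exp (-Real.log 2) := Real.exp_le_exp.mpr this
      _ = 1/2 := by rw [Real.exp_neg, Real.exp_log] <;> norm_num
  -- compact minimum
  obtain ⟨p₀, hp₀K, hp₀min⟩ :
      ∃ p₀ ∈ Metric.closedBall z₀ ε ×ˢ Icc (-R) R,
        IsMinOn (fun p : ℂ × ℝ => ‖1 + Complex.exp (p.1 + Complex.I * τ * p.2)‖)
          (Metric.closedBall z₀ ε ×ˢ Icc (-R) R) p₀ := by
    apply ((isCompact_closedBall z₀ ε).prod isCompact_Icc).exists_isMinOn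
    · exact ⟨(z₀, 0), Set.mk_mem_prod (Metric.mem_closedBall_self hε)
        (by constructor <;> linarith)⟩
    · apply Continuous.continuousOn
      apply Continuous.norm
      apply Continuous.add continuous_const
      apply Continuous.cexp
      exact (continuous_fst.add (continuous_const.mul
        (Complex.continuous_ofReal.comp continuous_snd)))
  have hp₀strip : p₀.1 ∈ stripS τ := hball hp₀K.1
  have hm : 0 < ‖1 + Complex.exp (p₀.1 + Complex.I * τ * p₀.2)‖ :=
    norm_pos_iff.mpr (one_add_ne hτ hp₀strip p₀.2)
  set m := ‖1 + Complex.exp (p₀.1 + Complex.I * τ * p₀.2)‖ with hmdef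
  set c : ℝ := min m (1/2) with hcdef
  have hc : 0 < c := lt_min hm (by norm_num)
  -- lower bound everywhere
  have hlb : ∀ z ∈ Metric.closedBall z₀ ε, ∀ x : ℝ,
      c ≤ ‖1 + Complex.exp (z + Complex.I * τ * x)‖ := by
    intro z hzb x
    rcases le_total x (-R) with hx | hx
    · have h2 := hbig z hzb x hx
      have : ‖Complex.exp (z + Complex.I * τ * x)‖
          ≤ ‖1 + Complex.exp (z + Complex.I * τ * x)‖ + 1 := by
        calc ‖Complex.exp (z + Complex.I * τ * x)‖
            = ‖(1 + Complex.exp (z + Complex.I * τ * x)) - 1‖ := by ring_nf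
          _ ≤ ‖1 + Complex.exp (z + Complex.I * τ * x)‖ + ‖(1:ℂ)‖ := norm_sub_le _ _
          _ = ‖1 + Complex.exp (z + Complex.I * τ * x)‖ + 1 := by rw [norm_one]
      have := min_le_right m (1/2)
      rw [← hcdef] at this
      linarith
    rcases le_total R x with hx' | hx'
    · have h2 := hsmall z hzb x hx'
      have : (1:ℝ) ≤ ‖1 + Complex.exp (z + Complex.I * τ * x)‖
          + ‖Complex.exp (z + Complex.I * τ * x)‖ := by
        calc (1:ℝ) = ‖(1:ℂ)‖ := norm_one.symm
          _ = ‖(1 + Complex.exp (z + Complex.I * τ * x))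
              - Complex.exp (z + Complex.I * τ * x)‖ := by ring_nf
          _ ≤ _ := norm_sub_le _ _
      have := min_le_right m (1/2)
      rw [← hcdef] at this
      linarith
    · have := hp₀min (Set.mk_mem_prod hzb (by constructor <;> linarith : x ∈ Icc (-R) R))
      have h2 : m ≤ ‖1 + Complex.exp (z + Complex.I * τ * x)‖ := this
      have := min_le_left m (1/2)
      rw [← hcdef] at this
      linarith
  -- constants
  set K : ℝ := Real.exp (z₀.re + ε) + 2 * Real.exp (ε - z₀.re) + Real.exp (τ.im * R) / c
      with hKdef
  have hK1 : 0 < Real.exp (z₀.re + ε) := Real.exp_pos _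
  have hK2 : 0 < 2 * Real.exp (ε - z₀.re) := by positivity
  have hK3 : 0 < Real.exp (τ.im * R) / c := by positivity
  refine ⟨c, K, hc, by positivity, ?_⟩
  intro z hzb x
  have hre := hre_mem z hzb
  refine ⟨hlb z hzb x, ?_, ?_⟩
  · -- upper bound on ‖exp w‖
    rw [norm_exp_w]
    have : Real.exp (z.re - τ.im * x) ≤ Real.exp (z₀.re + ε) * Real.exp (-(τ.im * x)) := by
      rw [← Real.exp_add]
      apply Real.exp_le_exp.mpr
      linarith [hre.2]
    calc Real.exp (z.re - τ.im * x) ≤ Real.exp (z₀.re + ε) * Real.exp (-(τ.im * x)) := this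
      _ ≤ K * Real.exp (-(τ.im * x)) := by
          apply mul_le_mul_of_nonneg_right _ (Real.exp_pos _).le
          rw [hKdef]; linarith
  · -- inverse bound for x ≤ 0
    intro hx
    rw [norm_inv]
    rcases le_total x (-R) with hxR | hxR
    · -- use the big-norm bound
      have h2 := hbig z hzb x hxR
      have hlow : Real.exp (z₀.re - ε) * Real.exp (-(τ.im * x))
          ≤ ‖Complex.exp (z + Complex.I * τ * x)‖ := by
        rw [norm_exp_w, ← Real.exp_add]
        apply Real.exp_le_exp.mpr
        linarith [hre.1]
      have hge : ‖Complex.exp (z + Complex.I * τ * x)‖ - 1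
          ≤ ‖1 + Complex.exp (z + Complex.I * τ * x)‖ := by
        calc ‖Complex.exp (z + Complex.I * τ * x)‖ - 1
            = ‖Complex.exp (z + Complex.I * τ * x)‖ - ‖(1:ℂ)‖ := by rw [norm_one]
          _ ≤ ‖Complex.exp (z + Complex.I * τ * x) + 1‖ := by
              have := norm_sub_le (Complex.exp (z + Complex.I * τ * x) + 1) 1
              simp only [add_sub_cancel_right] at this
              linarith
          _ = _ := by rw [add_comm]
      have hhalf : ‖Complex.exp (z + Complex.I * τ * x)‖ / 2
          ≤ ‖1 + Complex.exp (z + Complex.I * τ * x)‖ := by linarith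
      have hval : 0 < ‖Complex.exp (z + Complex.I * τ * x)‖ := by linarith
      have : ‖1 + Complex.exp (z + Complex.I * τ * x)‖⁻¹
          ≤ 2 / ‖Complex.exp (z + Complex.I * τ * x)‖ := by
        rw [inv_le_iff_one_le_mul₀ (by linarith)]
        rw [div_mul_eq_mul_div, le_div_iff₀ hval]
        nlinarith
      have h3 : 2 / ‖Complex.exp (z + Complex.I * τ * x)‖
          ≤ 2 / (Real.exp (z₀.re - ε) * Real.exp (-(τ.im * x))) := by
        apply div_le_div_of_nonneg_left _ _ hlow <;> positivity
      have h4 : 2 / (Real.exp (z₀.re - ε) * Real.exp (-(τ.im * x)))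
          = 2 * Real.exp (ε - z₀.re) * Real.exp (τ.im * x) := by
        have he : (Real.exp (z₀.re - ε) * Real.exp (-(τ.im * x)))⁻¹
            = Real.exp (ε - z₀.re) * Real.exp (τ.im * x) := by
          rw [← Real.exp_add, ← Real.exp_neg, ← Real.exp_add]
          congr 1
          ring
        rw [div_eq_mul_inv, he]
        ring
      calc ‖1 + Complex.exp (z + Complex.I * τ * x)‖⁻¹
          ≤ 2 / ‖Complex.exp (z + Complex.I * τ * x)‖ := this
        _ ≤ 2 / (Real.exp (z₀.re - ε) * Real.exp (-(τ.im * x))) := h3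
        _ = 2 * Real.exp (ε - z₀.re) * Real.exp (τ.im * x) := h4
        _ ≤ K * Real.exp (τ.im * x) := by
            apply mul_le_mul_of_nonneg_right _ (Real.exp_pos _).le
            rw [hKdef]; linarith
    · -- middle zone: use c
      have h2 := hlb z hzb x
      have : ‖1 + Complex.exp (z + Complex.I * τ * x)‖⁻¹ ≤ c⁻¹ := by
        apply inv_anti₀ hc h2
      have h3 : c⁻¹ ≤ Real.exp (τ.im * R) / c * Real.exp (τ.im * x) := by
        rw [div_mul_eq_mul_div, le_div_iff₀ hc, inv_mul_cancel₀ (ne_of_gt hc)]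
        have : 1 = Real.exp 0 := Real.exp_zero.symm
        rw [this, ← Real.exp_add]
        apply Real.exp_le_exp.mpr
        have : τ.im * (-R) ≤ τ.im * x := mul_le_mul_of_nonneg_left (by linarith) hτ.le
        linarith
      calc ‖1 + Complex.exp (z + Complex.I * τ * x)‖⁻¹ ≤ c⁻¹ := this
        _ ≤ Real.exp (τ.im * R) / c * Real.exp (τ.im * x) := h3
        _ ≤ K * Real.exp (τ.im * x) := by
            apply mul_le_mul_of_nonneg_right _ (Real.exp_pos _).le
            rw [hKdef]; linarith

lemma int_exp_Iic {b : ℝ} (hb : 0 < b) :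
    IntegrableOn (fun x : ℝ => Real.exp (b * x)) (Iic (0:ℝ)) := by
  have h1 : IntegrableOn (fun x : ℝ => Real.exp (-b * x)) (Ioi (0:ℝ)) :=
    exp_neg_integrableOn_Ioi 0 hb
  have h2 : IntegrableOn ((fun x : ℝ => Real.exp (-b * x)) ∘ Neg.neg)
      (Neg.neg ⁻¹' (Ioi (0:ℝ))) := by
    rw [(Measure.measurePreserving_neg (volume : Measure ℝ)).integrableOn_comp_preimage
      (Homeomorph.neg ℝ).measurableEmbedding]
    exact h1
  have h3 : IntegrableOn (fun x : ℝ => Real.exp (b * x)) (Iio (0:ℝ)) := by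
    have : (Neg.neg ⁻¹' (Ioi (0:ℝ))) = Iio (0:ℝ) := by
      ext y; simp
    rw [this] at h2
    apply IntegrableOn.congr_fun h2 _ measurableSet_Iio
    intro y _; simp only [Function.comp]; ring_nf
  exact Iff.mpr integrableOn_Iic_iff_integrableOn_Iio h3

lemma integrable_bound_fun (A δ : ℝ) (hδ : 0 < δ) :
    Integrable (fun x : ℝ => A * Real.exp (-δ * |x|)) := by
  rw [← integrableOn_univ, ← Set.Iic_union_Ioi (a := (0:ℝ)), integrableOn_union]
  constructor
  · apply IntegrableOn.congr_fun ((int_exp_Iic hδ).const_mul A) _ measurableSet_Iic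
    intro x hx
    simp only [Set.mem_Iic] at hx
    simp only [abs_of_nonpos hx]
    ring_nf
  · apply IntegrableOn.congr_fun ((exp_neg_integrableOn_Ioi 0 hδ).const_mul A) _ measurableSet_Ioi
    intro x hx
    simp only [Set.mem_Ioi] at hx
    simp only [abs_of_pos hx]

lemma integrable_of_bound {E : Type*} [NormedAddCommGroup E] {f : ℝ → E}
    (hm : AEStronglyMeasurable f (volume : Measure ℝ)) (A δ : ℝ) (hδ : 0 < δ)
    (h : ∀ x : ℝ, ‖f x‖ ≤ A * Real.exp (-δ * |x|)) : Integrable f := by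
  exact (integrable_bound_fun A δ hδ).mono' hm (ae_of_all _ h)

lemma cont_inner (τ z : ℂ) : Continuous (fun x : ℝ => z + Complex.I * τ * (x : ℂ)) :=
  continuous_const.add (continuous_const.mul Complex.continuous_ofReal)

lemma cont_inv {τ z : ℂ} (hτ : 0 < τ.im) (hz : z ∈ stripS τ) :
    Continuous (fun x : ℝ => (1 + Complex.exp (z + Complex.I * τ * (x : ℂ)))⁻¹) :=
  (continuous_const.add (cont_inner τ z).cexp).inv₀ (one_add_ne hτ hz)

-- facts about the real factor
lemma norm_one_add_exp_real (x : ℝ) :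
    ‖1 + Complex.exp (x : ℂ)‖ = 1 + Real.exp x := by
  rw [← Complex.ofReal_exp, ← Complex.ofReal_one, ← Complex.ofReal_add,
    Complex.norm_real, Real.norm_of_nonneg (by positivity)]

lemma one_add_exp_real_ne (x : ℝ) : 1 + Complex.exp (x : ℂ) ≠ 0 := by
  intro h
  have := norm_one_add_exp_real x
  rw [h] at this
  simp at this
  nlinarith [Real.exp_pos x]

lemma norm_one_add_exp_neg_real (x : ℝ) :
    ‖1 + Complex.exp (-(x : ℂ))‖ = 1 + Real.exp (-x) := by
  rw [← Complex.ofReal_neg]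
  exact norm_one_add_exp_real (-x)

lemma one_add_exp_neg_real_ne (x : ℝ) : 1 + Complex.exp (-(x : ℂ)) ≠ 0 := by
  rw [← Complex.ofReal_neg]; exact one_add_exp_real_ne (-x)

-- integrand of Fk
lemma integrable_f1 {τ z : ℂ} (hτ : 0 < τ.im) (hz : z ∈ stripS τ) :
    Integrable (fun x : ℝ =>
      1 / ((1 + Complex.exp (z + Complex.I * τ * x)) * (1 + Complex.exp (x : ℂ)))) := by
  have hball : Metric.closedBall z 0 ⊆ stripS τ := by
    intro w hw
    rw [Metric.closedBall_zero] at hw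
    rw [hw]; exact hz
  obtain ⟨c, K, hc, hK, hm⟩ := master hτ z 0 le_rfl hball
  have hzb : z ∈ Metric.closedBall z 0 := Metric.mem_closedBall_self le_rfl
  set δ : ℝ := min τ.im 1 with hδdef
  have hδ : 0 < δ := lt_min hτ (by norm_num)
  apply integrable_of_bound _ (max K c⁻¹) δ hδ
  · intro x
    obtain ⟨h1, h2, h3⟩ := hm z hzb x
    have hnorm : ‖1 / ((1 + Complex.exp (z + Complex.I * τ * x)) * (1 + Complex.exp (x : ℂ)))‖
        = ‖(1 + Complex.exp (z + Complex.I * τ * x))⁻¹‖ * ‖(1 + Complex.exp (x : ℂ))⁻¹‖ := by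
      rw [one_div, mul_inv, norm_mul]
    rw [hnorm]
    have hb1 : ‖(1 + Complex.exp (z + Complex.I * τ * x))⁻¹‖ ≤ c⁻¹ := by
      rw [norm_inv]
      exact inv_anti₀ hc h1
    have hb2 : ‖(1 + Complex.exp (x : ℂ))⁻¹‖ ≤ 1 := by
      rw [norm_inv, norm_one_add_exp_real]
      rw [inv_le_one_iff₀]
      right; nlinarith [Real.exp_pos x]
    have hb3 : ‖(1 + Complex.exp (x : ℂ))⁻¹‖ ≤ Real.exp (-x) := by
      rw [norm_inv, norm_one_add_exp_real]
      rw [Real.exp_neg]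
      apply inv_anti₀ (Real.exp_pos x)
      nlinarith [Real.exp_pos x]
    rcases le_total x 0 with hx | hx
    · have hb4 := h3 hx
      calc ‖(1 + Complex.exp (z + Complex.I * τ * x))⁻¹‖ * ‖(1 + Complex.exp (x : ℂ))⁻¹‖
          ≤ (K * Real.exp (τ.im * x)) * 1 := by
            apply mul_le_mul hb4 hb2 (norm_nonneg _) (by positivity)
        _ = K * Real.exp (τ.im * x) := by ring
        _ ≤ max K c⁻¹ * Real.exp (-δ * |x|) := by
            apply mul_le_mul (le_max_left _ _) _ (Real.exp_pos _).le
              (le_trans (by positivity) (le_max_left K c⁻¹))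
            apply Real.exp_le_exp.mpr
            rw [_root_.abs_of_nonpos hx]
            have : δ ≤ τ.im := min_le_left _ _
            nlinarith
    · calc ‖(1 + Complex.exp (z + Complex.I * τ * x))⁻¹‖ * ‖(1 + Complex.exp (x : ℂ))⁻¹‖
          ≤ c⁻¹ * Real.exp (-x) := by
            apply mul_le_mul hb1 hb3 (norm_nonneg _) (by positivity)
        _ ≤ max K c⁻¹ * Real.exp (-δ * |x|) := by
            apply mul_le_mul (le_max_right _ _) _ (Real.exp_pos _).le
              (le_trans (by positivity) (le_max_left K c⁻¹))
            apply Real.exp_le_exp.mpr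
            rw [_root_.abs_of_nonneg hx]
            have : δ ≤ 1 := min_le_right _ _
            nlinarith
  · apply Continuous.aestronglyMeasurable
    apply Continuous.div continuous_const
    · exact (continuous_const.add (cont_inner τ z).cexp).mul
        (continuous_const.add (Complex.continuous_ofReal.cexp))
    · intro x
      exact mul_ne_zero (one_add_ne hτ hz x) (one_add_exp_real_ne x)

lemma inv_sub_one {A : ℂ} (h : 1 + A ≠ 0) : (1 + A)⁻¹ - 1 = -(A * (1 + A)⁻¹) := by
  field_simp
  ring

lemma norm_exp_neg_real (x : ℝ) : ‖Complex.exp (-(x:ℂ))‖ = Real.exp (-x) := by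
  rw [Complex.norm_exp]
  simp

lemma integrable_h {τ z : ℂ} (hτ : 0 < τ.im) (hz : z ∈ stripS τ) :
    Integrable (fun x : ℝ =>
      (1 + Complex.exp (z + Complex.I * τ * x))⁻¹ - (1 + Complex.exp (-(x:ℂ)))⁻¹) := by
  have hball : Metric.closedBall z 0 ⊆ stripS τ := by
    intro w hw; rw [Metric.closedBall_zero] at hw; rw [hw]; exact hz
  obtain ⟨c, K, hc, hK, hm⟩ := master hτ z 0 le_rfl hball
  have hzb : z ∈ Metric.closedBall z 0 := Metric.mem_closedBall_self le_rfl
  set δ : ℝ := min τ.im 1 with hδdef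
  have hδ : 0 < δ := lt_min hτ (by norm_num)
  have hδ1 : δ ≤ τ.im := min_le_left _ _
  have hδ2 : δ ≤ 1 := min_le_right _ _
  apply integrable_of_bound _ (max (K + 1) (K * c⁻¹ + 1)) δ hδ
  · intro x
    obtain ⟨h1, h2, h3⟩ := hm z hzb x
    rcases le_total x 0 with hx | hx
    · -- left tail
      have hb1 := h3 hx
      have hb2 : ‖(1 + Complex.exp (-(x:ℂ)))⁻¹‖ ≤ Real.exp x := by
        rw [norm_inv, norm_one_add_exp_neg_real]
        have : Real.exp (-x) ≤ 1 + Real.exp (-x) := by nlinarith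
        calc (1 + Real.exp (-x))⁻¹ ≤ (Real.exp (-x))⁻¹ := inv_anti₀ (Real.exp_pos _) this
          _ = Real.exp x := by rw [← Real.exp_neg, neg_neg]
      have he1 : Real.exp (τ.im * x) ≤ Real.exp (δ * x) :=
        Real.exp_le_exp.mpr (by nlinarith)
      have he2 : Real.exp x ≤ Real.exp (δ * x) :=
        Real.exp_le_exp.mpr (by nlinarith)
      have habs : -δ * |x| = δ * x := by rw [_root_.abs_of_nonpos hx]; ring
      rw [habs]
      calc ‖(1 + Complex.exp (z + Complex.I * τ * x))⁻¹ - (1 + Complex.exp (-(x:ℂ)))⁻¹‖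
          ≤ ‖(1 + Complex.exp (z + Complex.I * τ * x))⁻¹‖
            + ‖(1 + Complex.exp (-(x:ℂ)))⁻¹‖ := norm_sub_le _ _
        _ ≤ K * Real.exp (τ.im * x) + Real.exp x := add_le_add hb1 hb2
        _ ≤ K * Real.exp (δ * x) + Real.exp (δ * x) := by
            have := mul_le_mul_of_nonneg_left he1 hK.le
            linarith
        _ = (K + 1) * Real.exp (δ * x) := by ring
        _ ≤ max (K + 1) (K * c⁻¹ + 1) * Real.exp (δ * x) := by
            apply mul_le_mul_of_nonneg_right (le_max_left _ _) (Real.exp_pos _).le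
    · -- right tail
      have key : (1 + Complex.exp (z + Complex.I * τ * x))⁻¹ - (1 + Complex.exp (-(x:ℂ)))⁻¹
          = -(Complex.exp (z + Complex.I * τ * x)
              * (1 + Complex.exp (z + Complex.I * τ * x))⁻¹)
            - -(Complex.exp (-(x:ℂ)) * (1 + Complex.exp (-(x:ℂ)))⁻¹) := by
        rw [← inv_sub_one (one_add_ne hτ hz x), ← inv_sub_one (one_add_exp_neg_real_ne x)]
        ring
      rw [key]
      have hb1 : ‖(1 + Complex.exp (z + Complex.I * τ * x))⁻¹‖ ≤ c⁻¹ := by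
        rw [norm_inv]; exact inv_anti₀ hc h1
      have hb2 : ‖(1 + Complex.exp (-(x:ℂ)))⁻¹‖ ≤ 1 := by
        rw [norm_inv, norm_one_add_exp_neg_real]
        rw [inv_le_one_iff₀]
        right; nlinarith [Real.exp_pos (-x)]
      have he1 : Real.exp (-(τ.im * x)) ≤ Real.exp (-(δ * x)) :=
        Real.exp_le_exp.mpr (by nlinarith)
      have he2 : Real.exp (-x) ≤ Real.exp (-(δ * x)) :=
        Real.exp_le_exp.mpr (by nlinarith)
      have habs : -δ * |x| = -(δ * x) := by rw [_root_.abs_of_nonneg hx]; ring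
      rw [habs]
      calc ‖-(Complex.exp (z + Complex.I * τ * x)
              * (1 + Complex.exp (z + Complex.I * τ * x))⁻¹)
            - -(Complex.exp (-(x:ℂ)) * (1 + Complex.exp (-(x:ℂ)))⁻¹)‖
          ≤ ‖Complex.exp (z + Complex.I * τ * x)‖
              * ‖(1 + Complex.exp (z + Complex.I * τ * x))⁻¹‖
            + ‖Complex.exp (-(x:ℂ))‖ * ‖(1 + Complex.exp (-(x:ℂ)))⁻¹‖ := by
            calc _ ≤ ‖-(Complex.exp (z + Complex.I * τ * x)
              * (1 + Complex.exp (z + Complex.I * τ * x))⁻¹)‖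
                + ‖-(Complex.exp (-(x:ℂ)) * (1 + Complex.exp (-(x:ℂ)))⁻¹)‖ := norm_sub_le _ _
              _ = _ := by rw [norm_neg, norm_neg, norm_mul, norm_mul]
        _ ≤ (K * Real.exp (-(τ.im * x))) * c⁻¹ + Real.exp (-x) * 1 := by
            apply add_le_add
            · apply mul_le_mul h2 hb1 (norm_nonneg _) (by positivity)
            · rw [norm_exp_neg_real]
              apply mul_le_mul_of_nonneg_left hb2 (Real.exp_pos _).le
        _ ≤ (K * c⁻¹) * Real.exp (-(δ * x)) + Real.exp (-(δ * x)) := by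
            have t1 : (K * Real.exp (-(τ.im * x))) * c⁻¹ ≤ (K * c⁻¹) * Real.exp (-(δ * x)) := by
              have := mul_le_mul_of_nonneg_left he1 hK.le
              have hcip : (0:ℝ) ≤ c⁻¹ := by positivity
              nlinarith
            have t2 : Real.exp (-x) * 1 ≤ Real.exp (-(δ * x)) := by rw [mul_one]; exact he2
            linarith
        _ = (K * c⁻¹ + 1) * Real.exp (-(δ * x)) := by ring
        _ ≤ max (K + 1) (K * c⁻¹ + 1) * Real.exp (-(δ * x)) := by
            apply mul_le_mul_of_nonneg_right (le_max_right _ _) (Real.exp_pos _).le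
  · apply Continuous.aestronglyMeasurable
    apply Continuous.sub
    · exact (continuous_const.add (cont_inner τ z).cexp).inv₀ (one_add_ne hτ hz)
    · exact (continuous_const.add (Complex.continuous_ofReal.neg.cexp)).inv₀
        one_add_exp_neg_real_ne

lemma deriv_bound {τ : ℂ} (hτ : 0 < τ.im) (z₀ : ℂ) (ε : ℝ) (hε : 0 ≤ ε)
    (hball : Metric.closedBall z₀ ε ⊆ stripS τ) :
    ∃ A : ℝ, 0 < A ∧ ∀ z ∈ Metric.closedBall z₀ ε, ∀ x : ℝ,
      ‖Complex.exp (z + Complex.I * τ * x)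
        * ((1 + Complex.exp (z + Complex.I * τ * x)) ^ 2)⁻¹‖
      ≤ A * Real.exp (-τ.im * |x|) := by
  obtain ⟨c, K, hc, hK, hm⟩ := master hτ z₀ ε hε hball
  refine ⟨max ((1 + c⁻¹) * K) (K * (c⁻¹ * c⁻¹)), by positivity, ?_⟩
  intro z hzb x
  obtain ⟨h1, h2, h3⟩ := hm z hzb x
  have hne : 1 + Complex.exp (z + Complex.I * τ * x) ≠ 0 := one_add_ne hτ (hball hzb) x
  have hb1 : ‖(1 + Complex.exp (z + Complex.I * τ * x))⁻¹‖ ≤ c⁻¹ := by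
    rw [norm_inv]; exact inv_anti₀ hc h1
  rcases le_total x 0 with hx | hx
  · have key : Complex.exp (z + Complex.I * τ * x)
        * ((1 + Complex.exp (z + Complex.I * τ * x)) ^ 2)⁻¹
        = (1 - (1 + Complex.exp (z + Complex.I * τ * x))⁻¹)
          * (1 + Complex.exp (z + Complex.I * τ * x))⁻¹ := by
      field_simp
      ring
    rw [key]
    have habs : -τ.im * |x| = τ.im * x := by rw [_root_.abs_of_nonpos hx]; ring
    rw [habs]
    calc ‖(1 - (1 + Complex.exp (z + Complex.I * τ * x))⁻¹)
          * (1 + Complex.exp (z + Complex.I * τ * x))⁻¹‖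
        = ‖1 - (1 + Complex.exp (z + Complex.I * τ * x))⁻¹‖
          * ‖(1 + Complex.exp (z + Complex.I * τ * x))⁻¹‖ := norm_mul _ _
      _ ≤ (1 + c⁻¹) * (K * Real.exp (τ.im * x)) := by
          apply mul_le_mul _ (h3 hx) (norm_nonneg _) (by positivity)
          calc ‖1 - (1 + Complex.exp (z + Complex.I * τ * x))⁻¹‖
              ≤ ‖(1:ℂ)‖ + ‖(1 + Complex.exp (z + Complex.I * τ * x))⁻¹‖ := norm_sub_le _ _
            _ ≤ 1 + c⁻¹ := by rw [norm_one]; linarith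
      _ = ((1 + c⁻¹) * K) * Real.exp (τ.im * x) := by ring
      _ ≤ max ((1 + c⁻¹) * K) (K * (c⁻¹ * c⁻¹)) * Real.exp (τ.im * x) := by
          apply mul_le_mul_of_nonneg_right (le_max_left _ _) (Real.exp_pos _).le
  · have habs : -τ.im * |x| = -(τ.im * x) := by rw [_root_.abs_of_nonneg hx]; ring
    rw [habs]
    calc ‖Complex.exp (z + Complex.I * τ * x)
          * ((1 + Complex.exp (z + Complex.I * τ * x)) ^ 2)⁻¹‖
        = ‖Complex.exp (z + Complex.I * τ * x)‖
          * (‖(1 + Complex.exp (z + Complex.I * τ * x))⁻¹‖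
            * ‖(1 + Complex.exp (z + Complex.I * τ * x))⁻¹‖) := by
          rw [norm_mul]
          congr 1
          rw [sq, mul_inv, norm_mul]
      _ ≤ (K * Real.exp (-(τ.im * x))) * (c⁻¹ * c⁻¹) := by
          apply mul_le_mul h2 _ (by positivity) (by positivity)
          apply mul_le_mul hb1 hb1 (norm_nonneg _) (by positivity)
      _ = (K * (c⁻¹ * c⁻¹)) * Real.exp (-(τ.im * x)) := by ring
      _ ≤ max ((1 + c⁻¹) * K) (K * (c⁻¹ * c⁻¹)) * Real.exp (-(τ.im * x)) := by
          apply mul_le_mul_of_nonneg_right (le_max_right _ _) (Real.exp_pos _).le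

lemma integrable_deriv {τ z : ℂ} (hτ : 0 < τ.im) (hz : z ∈ stripS τ) :
    Integrable (fun x : ℝ => Complex.exp (z + Complex.I * τ * x)
      * ((1 + Complex.exp (z + Complex.I * τ * x)) ^ 2)⁻¹) := by
  have hball : Metric.closedBall z 0 ⊆ stripS τ := by
    intro w hw; rw [Metric.closedBall_zero] at hw; rw [hw]; exact hz
  obtain ⟨A, hA, hbd⟩ := deriv_bound hτ z 0 le_rfl hball
  apply integrable_of_bound _ A τ.im hτ
  · intro x
    exact hbd z (Metric.mem_closedBall_self le_rfl) x
  · apply Continuous.aestronglyMeasurable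
    apply Continuous.mul ((cont_inner τ z).cexp)
    apply Continuous.inv₀
    · exact ((continuous_const.add (cont_inner τ z).cexp).pow 2)
    · intro x
      exact pow_ne_zero 2 (one_add_ne hτ hz x)

lemma tau_ne {τ : ℂ} (hτ : 0 < τ.im) : τ ≠ 0 := by
  intro h; rw [h] at hτ; simp at hτ

lemma hasDerivAt_g {τ z : ℂ} (hτ : 0 < τ.im) (hz : z ∈ stripS τ) (x : ℝ) :
    HasDerivAt (fun x : ℝ => -(Complex.I * τ)⁻¹ * (1 + Complex.exp (z + Complex.I * τ * x))⁻¹)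
      (Complex.exp (z + Complex.I * τ * x)
        * ((1 + Complex.exp (z + Complex.I * τ * x)) ^ 2)⁻¹) x := by
  have h1 : HasDerivAt (fun u : ℂ => z + Complex.I * τ * u) (Complex.I * τ) (x : ℂ) := by
    simpa using ((hasDerivAt_id (x : ℂ)).const_mul (Complex.I * τ)).const_add z
  have h4 := ((h1.cexp.const_add (1 : ℂ)).inv (one_add_ne hτ hz x)).const_mul
    (-(Complex.I * τ)⁻¹)
  have h6 := h4.comp_ofReal
  convert h6 using 1
  · rfl
  have hne := one_add_ne hτ hz x
  have hIτ : Complex.I * τ ≠ 0 := mul_ne_zero Complex.I_ne_zero (tau_ne hτ)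
  field_simp
  rw [div_self (tau_ne hτ)]

lemma tendsto_sub_atTop {τ z : ℂ} (hτ : 0 < τ.im) :
    Tendsto (fun x : ℝ => z.re - τ.im * x) atBot atTop := by
  have ha : Tendsto (fun x : ℝ => τ.im * x) atBot atBot :=
    Tendsto.const_mul_atBot hτ tendsto_id
  have hb : Tendsto (fun x : ℝ => -(τ.im * x)) atBot atTop :=
    tendsto_neg_atBot_atTop.comp ha
  simpa [sub_eq_add_neg] using tendsto_atTop_add_const_left atBot z.re hb

lemma tendsto_sub_atBot {τ z : ℂ} (hτ : 0 < τ.im) :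
    Tendsto (fun x : ℝ => z.re - τ.im * x) atTop atBot := by
  have ha : Tendsto (fun x : ℝ => τ.im * x) atTop atTop :=
    Tendsto.const_mul_atTop hτ tendsto_id
  have hb : Tendsto (fun x : ℝ => -(τ.im * x)) atTop atBot :=
    tendsto_neg_atTop_atBot.comp ha
  simpa [sub_eq_add_neg] using tendsto_atBot_add_const_left atTop z.re hb

lemma tendsto_g_bot {τ z : ℂ} (hτ : 0 < τ.im) :
    Tendsto (fun x : ℝ => -(Complex.I * τ)⁻¹ * (1 + Complex.exp (z + Complex.I * τ * x))⁻¹)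
      atBot (nhds 0) := by
  have texp : Tendsto (fun x : ℝ => Real.exp (z.re - τ.im * x)) atBot atTop :=
    Real.tendsto_exp_atTop.comp (tendsto_sub_atTop hτ)
  have h1 : Tendsto (fun x : ℝ => ‖1 + Complex.exp (z + Complex.I * τ * x)‖) atBot atTop := by
    apply tendsto_atTop_mono (fun x => ?_) (tendsto_atTop_add_const_right atBot (-1) texp)
    have : ‖Complex.exp (z + Complex.I * τ * x)‖ - ‖(1:ℂ)‖
        ≤ ‖1 + Complex.exp (z + Complex.I * τ * x)‖ := by
      have := norm_sub_le (1 + Complex.exp (z + Complex.I * τ * x)) 1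
      simp only [add_sub_cancel_left] at this
      linarith
    rw [norm_one, norm_exp_w] at this
    linarith
  have h2 : Tendsto (fun x : ℝ => (1 + Complex.exp (z + Complex.I * τ * x))⁻¹) atBot (nhds 0) := by
    rw [tendsto_zero_iff_norm_tendsto_zero]
    simpa only [norm_inv, Pi.inv_def] using h1.inv_tendsto_atTop
  simpa using h2.const_mul (-(Complex.I * τ)⁻¹)

lemma tendsto_g_top {τ z : ℂ} (hτ : 0 < τ.im) :
    Tendsto (fun x : ℝ => -(Complex.I * τ)⁻¹ * (1 + Complex.exp (z + Complex.I * τ * x))⁻¹)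
      atTop (nhds (-(Complex.I * τ)⁻¹)) := by
  have texp : Tendsto (fun x : ℝ => Real.exp (z.re - τ.im * x)) atTop (nhds 0) :=
    Real.tendsto_exp_atBot.comp (tendsto_sub_atBot hτ)
  have h1 : Tendsto (fun x : ℝ => Complex.exp (z + Complex.I * τ * x)) atTop (nhds 0) := by
    rw [tendsto_zero_iff_norm_tendsto_zero]
    exact texp.congr (fun x => (norm_exp_w τ z x).symm)
  have h2 : Tendsto (fun x : ℝ => 1 + Complex.exp (z + Complex.I * τ * x)) atTop (nhds 1) := by
    simpa using tendsto_const_nhds.add h1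
  have h3 : Tendsto (fun x : ℝ => (1 + Complex.exp (z + Complex.I * τ * x))⁻¹) atTop (nhds 1) := by
    simpa using h2.inv₀ one_ne_zero
  simpa using h3.const_mul (-(Complex.I * τ)⁻¹)

lemma ftc {τ z : ℂ} (hτ : 0 < τ.im) (hz : z ∈ stripS τ) :
    ∫ x : ℝ, Complex.exp (z + Complex.I * τ * x)
      * ((1 + Complex.exp (z + Complex.I * τ * x)) ^ 2)⁻¹ = Complex.I / τ := by
  have := MeasureTheory.integral_of_hasDerivAt_of_tendsto (hasDerivAt_g hτ hz)
    (integrable_deriv hτ hz) (tendsto_g_bot hτ) (tendsto_g_top hτ)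
  rw [this, sub_zero, mul_inv, Complex.inv_I, div_eq_mul_inv]
  ring

def Phi (τ Z : ℂ) : ℂ :=
  ∫ x : ℝ, ((1 + Complex.exp (Z + Complex.I * τ * x))⁻¹ - (1 + Complex.exp (-(x:ℂ)))⁻¹)

lemma cont_h {τ z : ℂ} (hτ : 0 < τ.im) (hz : z ∈ stripS τ) :
    Continuous (fun x : ℝ =>
      (1 + Complex.exp (z + Complex.I * τ * x))⁻¹ - (1 + Complex.exp (-(x:ℂ)))⁻¹) := by
  apply Continuous.sub
  · exact (continuous_const.add (cont_inner τ z).cexp).inv₀ (one_add_ne hτ hz)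
  · exact (continuous_const.add (Complex.continuous_ofReal.neg.cexp)).inv₀
      one_add_exp_neg_real_ne

lemma hasDerivAt_Phi {τ z₀ : ℂ} (hτ : 0 < τ.im) (hz₀ : z₀ ∈ stripS τ) :
    HasDerivAt (Phi τ) (-(Complex.I / τ)) z₀ := by
  obtain ⟨ε, hε, hball⟩ := ball_subset hz₀
  obtain ⟨A, hA, hbd⟩ := deriv_bound hτ z₀ ε hε.le hball
  have key := hasDerivAt_integral_of_dominated_loc_of_deriv_le (𝕜 := ℂ)
    (F := fun Z x => (1 + Complex.exp (Z + Complex.I * τ * x))⁻¹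
      - (1 + Complex.exp (-(x:ℂ)))⁻¹)
    (F' := fun Z (x : ℝ) => -(Complex.exp (Z + Complex.I * τ * x)
      * ((1 + Complex.exp (Z + Complex.I * τ * x)) ^ 2)⁻¹))
    (x₀ := z₀) (s := Metric.ball z₀ ε) (bound := fun x => A * Real.exp (-τ.im * |x|)) (Metric.ball_mem_nhds z₀ hε)
    ?_ (integrable_h hτ hz₀) ?_ ?_ ((integrable_bound_fun A τ.im hτ)) ?_
  · have h2 := key.2
    have h3 : (∫ x : ℝ, -(Complex.exp (z₀ + Complex.I * τ * x)
        * ((1 + Complex.exp (z₀ + Complex.I * τ * x)) ^ 2)⁻¹)) = -(Complex.I / τ) := by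
      rw [integral_neg, ftc hτ hz₀]
    rw [h3] at h2
    exact h2
  · -- hF_meas
    have hnhds : Metric.closedBall z₀ ε ∈ nhds z₀ := Metric.closedBall_mem_nhds z₀ hε
    filter_upwards [hnhds] with Z hZ
    exact (cont_h hτ (hball hZ)).aestronglyMeasurable
  · -- hF'_meas
    apply Continuous.aestronglyMeasurable
    apply Continuous.neg
    apply Continuous.mul ((cont_inner τ z₀).cexp)
    apply Continuous.inv₀
    · exact ((continuous_const.add (cont_inner τ z₀).cexp).pow 2)
    · exact fun x => pow_ne_zero 2 (one_add_ne hτ hz₀ x)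
  · -- h_bound
    apply ae_of_all
    intro x Z hZ
    rw [norm_neg]
    exact hbd Z (Metric.ball_subset_closedBall hZ) x
  · -- h_diff
    apply ae_of_all
    intro x Z hZ
    have hZs : Z ∈ stripS τ := hball (Metric.ball_subset_closedBall hZ)
    have h1 : HasDerivAt (fun Z : ℂ => Z + Complex.I * τ * x) 1 Z :=
      (hasDerivAt_id Z).add_const _
    have h4 := ((h1.cexp.const_add (1:ℂ)).inv (one_add_ne hτ hZs x)).sub_const
      ((1 + Complex.exp (-(x:ℂ)))⁻¹)
    convert h4 using 1
    · rfl
    rw [mul_one, div_eq_mul_inv]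
    ring

lemma strip_convex (τ : ℂ) : Convex ℝ (stripS τ) := by
  intro z₁ h₁ z₂ h₂ a b ha hb hab
  rw [stripS, Set.mem_setOf_eq] at h₁ h₂ ⊢
  have hre : ((a • z₁ + b • z₂) * (starRingEnd ℂ) τ).re
      = a * (z₁ * (starRingEnd ℂ) τ).re + b * (z₂ * (starRingEnd ℂ) τ).re := by
    simp [Complex.add_re, Complex.mul_re, Complex.smul_re, Complex.smul_im,
      Complex.add_im]
    ring
  rw [hre]
  rcases eq_or_lt_of_le ha with ha0 | ha0
  · rw [← ha0] at hab ⊢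
    simp only [zero_mul, zero_add] at *
    have hb1 : b = 1 := by linarith
    rw [hb1, one_mul]
    exact h₂
  · have t1 : |a * (z₁ * (starRingEnd ℂ) τ).re| < a * (Real.pi * τ.im) := by
      rw [abs_mul, _root_.abs_of_pos ha0]
      exact mul_lt_mul_of_pos_left h₁ ha0
    have t2 : |b * (z₂ * (starRingEnd ℂ) τ).re| ≤ b * (Real.pi * τ.im) := by
      rw [abs_mul, _root_.abs_of_nonneg hb]
      apply mul_le_mul_of_nonneg_left h₂.le hb
    calc |a * (z₁ * (starRingEnd ℂ) τ).re + b * (z₂ * (starRingEnd ℂ) τ).re|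
        ≤ |a * (z₁ * (starRingEnd ℂ) τ).re| + |b * (z₂ * (starRingEnd ℂ) τ).re| := abs_add_le _ _
      _ < a * (Real.pi * τ.im) + b * (Real.pi * τ.im) := by linarith
      _ = Real.pi * τ.im := by rw [← add_mul, hab, one_mul]

lemma Phi_affine {τ z : ℂ} (hτ : 0 < τ.im) (hz : z ∈ stripS τ) (h0 : (0:ℂ) ∈ stripS τ) :
    Phi τ z = Phi τ 0 - Complex.I / τ * z := by
  set Ψ : ℂ → ℂ := fun Z => Phi τ Z + Complex.I / τ * Z with hΨdef
  have hΨ : ∀ Z ∈ stripS τ, HasDerivWithinAt Ψ 0 (stripS τ) Z := by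
    intro Z hZ
    have h1 := (hasDerivAt_Phi hτ hZ).add ((hasDerivAt_id Z).const_mul (Complex.I / τ))
    have h2 : -(Complex.I / τ) + Complex.I / τ * 1 = 0 := by ring
    rw [h2] at h1
    exact h1.hasDerivWithinAt
  have hmvt := Convex.norm_image_sub_le_of_norm_hasDerivWithin_le (f' := fun _ => (0:ℂ))
    (C := 0) hΨ (fun Z _ => by simp) (strip_convex τ) h0 hz
  rw [zero_mul] at hmvt
  have heq : Ψ z = Ψ 0 := sub_eq_zero.mp (norm_le_zero_iff.mp hmvt)
  simp only [hΨdef, mul_zero, add_zero] at heq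
  linear_combination heq



lemma key_id1 {A B : ℂ} (hA : A ≠ 0) (hB : B ≠ 0) (h1A : 1 + A ≠ 0) (h1B : 1 + B ≠ 0) :
    1/((1+A)*(1+B)) - 1/((1+A⁻¹)*(1+B⁻¹)) = (1+A)⁻¹ - (1+B⁻¹)⁻¹ := by
  have e1 : (1+A⁻¹) = (1+A)*A⁻¹ := by field_simp; ring
  have e2 : (1+B⁻¹) = (1+B)*B⁻¹ := by field_simp; ring
  rw [e1, e2]
  field_simp
  ring

lemma key_id2 {A B : ℂ} (hA : A ≠ 0) (hB : B ≠ 0) (h1A : 1 + A ≠ 0) (h1B : 1 + B ≠ 0) :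
    ((1+A)⁻¹ - (1+B⁻¹)⁻¹) + ((1+A⁻¹)⁻¹ - (1+B)⁻¹) = 0 := by
  have e1 : (1+A⁻¹) = (1+A)*A⁻¹ := by field_simp; ring
  have e2 : (1+B⁻¹) = (1+B)*B⁻¹ := by field_simp; ring
  rw [e1, e2]
  field_simp
  ring

lemma Phi_zero {τ : ℂ} (hτ : 0 < τ.im) : Phi τ 0 = 0 := by
  set f₀ : ℝ → ℂ := fun x =>
    (1 + Complex.exp (0 + Complex.I * τ * x))⁻¹ - (1 + Complex.exp (-(x:ℂ)))⁻¹ with hf₀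
  have hint : Integrable f₀ := integrable_h hτ (strip_zero hτ)
  have hneg : Integrable (fun x => f₀ (-x)) := hint.comp_neg
  have hsum : ∀ x : ℝ, f₀ x + f₀ (-x) = 0 := by
    intro x
    rw [hf₀]
    simp only
    have e1 : ((0:ℂ) + Complex.I * τ * ((-x : ℝ) : ℂ)) = -((0:ℂ) + Complex.I * τ * (x:ℂ)) := by
      push_cast; ring
    have e2 : (-((-x : ℝ) : ℂ)) = ((x : ℝ) : ℂ) := by push_cast; ring
    rw [e1, e2]
    simp only [Complex.exp_neg]
    exact key_id2 (Complex.exp_ne_zero _) (Complex.exp_ne_zero _)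
      (one_add_ne hτ (strip_zero hτ) x) (one_add_exp_real_ne x)
  have hzero : (∫ x : ℝ, (f₀ x + f₀ (-x))) = 0 := by
    have : (fun x : ℝ => f₀ x + f₀ (-x)) = fun _ => (0:ℂ) := funext hsum
    rw [this, integral_zero]
  rw [integral_add hint hneg, integral_neg_eq_self f₀ volume] at hzero
  have : Phi τ 0 = ∫ x : ℝ, f₀ x := rfl
  rw [this]
  linear_combination hzero / 2

theorem stmt3' (τ : ℂ) (hτ : 0 < τ.im) (z : ℂ) (hz : z ∈ stripS τ) :
    Fk z τ = Fk (-z) τ - Complex.I * z / τ := by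
  have hzn : -z ∈ stripS τ := strip_neg hz
  have h0 : (0:ℂ) ∈ stripS τ := strip_zero hτ
  set f1 : ℝ → ℂ := fun x =>
    1 / ((1 + Complex.exp (z + Complex.I * τ * x)) * (1 + Complex.exp (x : ℂ))) with hf1def
  set f2 : ℝ → ℂ := fun x =>
    1 / ((1 + Complex.exp (-z + Complex.I * τ * x)) * (1 + Complex.exp (x : ℂ))) with hf2def
  have hif1 : Integrable f1 := integrable_f1 hτ hz
  have hif2 : Integrable f2 := integrable_f1 hτ hzn
  have hif2n : Integrable (fun x => f2 (-x)) := hif2.comp_neg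
  have hFkz : Fk z τ = ∫ x : ℝ, f1 x := rfl
  have hFkneg : Fk (-z) τ = ∫ x : ℝ, f2 (-x) := (integral_neg_eq_self f2 volume).symm
  have hpt : ∀ x : ℝ, f1 x - f2 (-x)
      = (1 + Complex.exp (z + Complex.I * τ * x))⁻¹ - (1 + Complex.exp (-(x:ℂ)))⁻¹ := by
    intro x
    rw [hf1def, hf2def]
    simp only
    have e1 : (-z + Complex.I * τ * ((-x : ℝ) : ℂ)) = -(z + Complex.I * τ * (x:ℂ)) := by
      push_cast; ring
    have e2 : (((-x : ℝ)) : ℂ) = -((x : ℝ) : ℂ) := by push_cast; ring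
    rw [e1, e2]
    simp only [Complex.exp_neg]
    exact key_id1 (Complex.exp_ne_zero _) (Complex.exp_ne_zero _)
      (one_add_ne hτ hz x) (one_add_exp_real_ne x)
  have hdiff : Fk z τ - Fk (-z) τ = Phi τ z := by
    rw [hFkz, hFkneg, ← integral_sub hif1 hif2n]
    have : (fun x : ℝ => f1 x - f2 (-x)) = fun x : ℝ =>
        (1 + Complex.exp (z + Complex.I * τ * x))⁻¹ - (1 + Complex.exp (-(x:ℂ)))⁻¹ :=
      funext hpt
    rw [this]
    rfl
  have := Phi_affine hτ hz h0
  rw [Phi_zero hτ] at this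
  rw [this] at hdiff
  have hτne : τ ≠ 0 := by intro h; rw [h] at hτ; simp at hτ
  field_simp at hdiff ⊢
  linear_combination hdiff

end Stmt3Aux

theorem stmt3 (τ : ℂ) (hτ : 0 < τ.im) (z : ℂ) (hz : z ∈ stripS τ) :
    Fk z τ = Fk (-z) τ - Complex.I * z / τ :=
  Stmt3Aux.stmt3' τ hτ z hz

end
end

section
/- For every z ∈ ℂ with |Im(z)| < π and z ≠ 0, one has F(z; i) = ∫_ℝ 1/((1 + exp(z + ix)) · (1 + exp(x))) dx = z/(e^z − 1). -/
open MeasureTheory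

noncomputable section

section AuxStmt6

open Complex Filter Set Topology

variable {a : ℂ}

-- case facts about a = exp z
lemma auxA {z : ℂ} (hz : |z.im| < Real.pi) :
    (Complex.exp z).im ≠ 0 ∨ 0 < (Complex.exp z).re := by
  rcases eq_or_ne (Real.sin z.im) 0 with h | h
  · right
    have h1 : -Real.pi < z.im := by cases abs_lt.mp hz; linarith
    have h2 : z.im < Real.pi := (abs_lt.mp hz).2
    have him : z.im = 0 := (Real.sin_eq_zero_iff_of_lt_of_lt h1 h2).mp h
    rw [Complex.exp_re, him, Real.cos_zero, mul_one]
    exact Real.exp_pos _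
  · left
    rw [Complex.exp_im]
    exact mul_ne_zero (Real.exp_pos _).ne' h

lemma aux_slit_add (hA : a.im ≠ 0 ∨ 0 < a.re) {t : ℝ} (ht : 0 ≤ t) :
    ((t : ℂ) + a) ∈ Complex.slitPlane := by
  rcases hA with h | h
  · exact Or.inr (by simpa using h)
  · exact Or.inl (by simp only [Complex.add_re, Complex.ofReal_re]; linarith)

lemma aux_slit_one_add (hA : a.im ≠ 0 ∨ 0 < a.re) {t : ℝ} (ht : 0 < t) :
    ((1 : ℂ) + a * (t : ℂ)) ∈ Complex.slitPlane := by
  rcases hA with h | h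
  · refine Or.inr ?_
    simp only [Complex.add_im, Complex.one_im, Complex.mul_im, Complex.ofReal_re,
      Complex.ofReal_im, mul_zero, add_zero, zero_add]
    exact mul_ne_zero h ht.ne'
  · refine Or.inl ?_
    simp only [Complex.add_re, Complex.one_re, Complex.mul_re, Complex.ofReal_re,
      Complex.ofReal_im, mul_zero, sub_zero]
    nlinarith

lemma aux_lb_add (hA : a.im ≠ 0 ∨ 0 < a.re) :
    ∃ m > 0, ∀ t : ℝ, 0 ≤ t → m ≤ ‖(t : ℂ) + a‖ := by
  rcases hA with h | h
  · refine ⟨|a.im|, abs_pos.mpr h, fun t ht => ?_⟩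
    have : |((t : ℂ) + a).im| ≤ ‖(t : ℂ) + a‖ := Complex.abs_im_le_norm _
    simpa using this
  · refine ⟨a.re, h, fun t ht => ?_⟩
    have h2 : ((t : ℂ) + a).re ≤ ‖(t : ℂ) + a‖ := Complex.re_le_norm _
    simp only [Complex.add_re, Complex.ofReal_re] at h2
    linarith

lemma aux_lb_one_add (ha : a ≠ 0) (hA : a.im ≠ 0 ∨ 0 < a.re) :
    ∃ m > 0, ∀ t : ℝ, 0 ≤ t → m ≤ ‖1 + a * (t : ℂ)‖ := by
  rcases hA with h | h
  · have haa : 0 < ‖a‖ := norm_pos_iff.mpr ha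
    refine ⟨|a.im| / ‖a‖, div_pos (abs_pos.mpr h) haa, fun t ht => ?_⟩
    have hsq : (|a.im| / ‖a‖) ^ 2 ≤ ‖1 + a * (t : ℂ)‖ ^ 2 := by
      rw [Complex.sq_norm, Complex.normSq_apply, div_pow, Complex.sq_norm, Complex.normSq_apply]
      simp only [Complex.add_re, Complex.one_re, Complex.mul_re, Complex.ofReal_re,
        Complex.ofReal_im, mul_zero, sub_zero, Complex.add_im, Complex.one_im, Complex.mul_im,
        add_zero, zero_add]
      rw [_root_.sq_abs]
      have hden : 0 < a.re * a.re + a.im * a.im := by nlinarith [mul_self_nonneg a.re, mul_self_pos.mpr h]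
      rw [div_le_iff₀ hden]
      nlinarith [sq_nonneg ((a.re * a.re + a.im * a.im) * t + a.re)]
    nlinarith [norm_nonneg (1 + a * (t : ℂ)), div_nonneg (abs_nonneg a.im) haa.le]
  · refine ⟨1, one_pos, fun t ht => ?_⟩
    have h2 : (1 + a * (t : ℂ)).re ≤ ‖1 + a * (t : ℂ)‖ := Complex.re_le_norm _
    simp only [Complex.add_re, Complex.one_re, Complex.mul_re, Complex.ofReal_re,
      Complex.ofReal_im, mul_zero, sub_zero] at h2
    nlinarith

lemma aux_exp_inv_eq (x : ℝ) : (Complex.exp (x:ℂ))⁻¹ = ((Real.exp (-x) : ℝ) : ℂ) := by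
  rw [Real.exp_neg, Complex.ofReal_inv, Complex.ofReal_exp]

lemma aux_one_add_exp_ne (x : ℝ) : (1 : ℂ) + Complex.exp (x:ℂ) ≠ 0 := by
  rw [← Complex.ofReal_exp, ← Complex.ofReal_one, ← Complex.ofReal_add, Complex.ofReal_ne_zero]
  positivity

lemma aux_abs_one_add_exp (x : ℝ) :
    ‖1 + Complex.exp (x:ℂ)‖ = 1 + Real.exp x := by
  rw [← Complex.ofReal_exp, ← Complex.ofReal_one, ← Complex.ofReal_add, Complex.norm_real, Real.norm_eq_abs]
  exact abs_of_pos (by positivity)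


lemma aux_e2 {s : ℂ} (hs : s ≠ 0) : 1 + a * s⁻¹ = (s + a) / s := by
  rw [eq_div_iff hs]; field_simp

lemma aux_calc_p {s : ℂ} (hs : s ≠ 0) (h1s : 1 + s ≠ 0) (hsa : s + a ≠ 0) :
    (1 + s⁻¹)⁻¹ * (-s / s ^ 2) - (1 + a * s⁻¹)⁻¹ * (a * (-s / s ^ 2))
      = (a - 1) * (1 / ((1 + a * s⁻¹) * (1 + s))) := by
  have e1 : (1 : ℂ) + s⁻¹ = (s + 1) / s := by rw [eq_div_iff hs]; field_simp
  have h1s' : s + 1 ≠ 0 := by rwa [add_comm] at h1s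
  rw [e1, aux_e2 hs]
  field_simp
  ring

lemma aux_calc_m {s : ℂ} (hs : s ≠ 0) (h1s : 1 + s ≠ 0) (hsa : s + a ≠ 0) :
    (1 + s)⁻¹ * s - (s + a)⁻¹ * s
      = (a - 1) * (1 / ((1 + a * s⁻¹) * (1 + s))) := by
  rw [aux_e2 hs]
  field_simp
  ring

lemma aux_hasDeriv_Hp (ha : a ≠ 0) (hA : a.im ≠ 0 ∨ 0 < a.re) (x : ℝ) :
    HasDerivAt (fun y : ℝ => Complex.log (1 + (Complex.exp (y:ℂ))⁻¹)
        - Complex.log (1 + a * (Complex.exp (y:ℂ))⁻¹))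
      ((a - 1) * (1 / ((1 + a * (Complex.exp (x:ℂ))⁻¹) * (1 + Complex.exp (x:ℂ))))) x := by
  have hs : Complex.exp (x:ℂ) ≠ 0 := Complex.exp_ne_zero _
  have h1s : (1:ℂ) + Complex.exp (x:ℂ) ≠ 0 := aux_one_add_exp_ne x
  have hslit1 : (1 + (Complex.exp ((x:ℝ):ℂ))⁻¹) ∈ Complex.slitPlane := by
    rw [aux_exp_inv_eq]
    refine Or.inl ?_
    simp only [Complex.add_re, Complex.one_re, Complex.ofReal_re]
    positivity
  have hslit2 : (1 + a * (Complex.exp ((x:ℝ):ℂ))⁻¹) ∈ Complex.slitPlane := by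
    rw [aux_exp_inv_eq]; exact aux_slit_one_add hA (Real.exp_pos _)
  have h1t : (1:ℂ) + (Complex.exp (x:ℂ))⁻¹ ≠ 0 := Complex.slitPlane_ne_zero hslit1
  have h1at : (1:ℂ) + a * (Complex.exp (x:ℂ))⁻¹ ≠ 0 := Complex.slitPlane_ne_zero hslit2
  have hinv : HasDerivAt (fun w : ℂ => (Complex.exp w)⁻¹)
      (-(Complex.exp ((x:ℝ):ℂ)) / (Complex.exp ((x:ℝ):ℂ))^2) ((x:ℝ):ℂ) :=
    (Complex.hasDerivAt_exp _).inv hs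
  have hu := hinv.const_add (1:ℂ)
  have hlog1 := (Complex.hasDerivAt_log hslit1).comp ((x:ℝ):ℂ) hu
  have hv := (hinv.const_mul a).const_add (1:ℂ)
  have hlog2 := (Complex.hasDerivAt_log hslit2).comp ((x:ℝ):ℂ) hv
  have key := (hlog1.sub hlog2).comp_ofReal
  have hsa : Complex.exp (x:ℂ) + a ≠ 0 := by
    intro h0
    apply h1at
    rw [aux_e2 hs, h0, zero_div]
  convert key using 1
  · rfl
  exact (aux_calc_p hs h1s hsa).symm

lemma aux_hasDeriv_Hm (ha : a ≠ 0) (hA : a.im ≠ 0 ∨ 0 < a.re) (x : ℝ) :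
    HasDerivAt (fun y : ℝ => Complex.log (1 + Complex.exp (y:ℂ))
        - Complex.log (Complex.exp (y:ℂ) + a))
      ((a - 1) * (1 / ((1 + a * (Complex.exp (x:ℂ))⁻¹) * (1 + Complex.exp (x:ℂ))))) x := by
  have hs : Complex.exp (x:ℂ) ≠ 0 := Complex.exp_ne_zero _
  have h1s : (1:ℂ) + Complex.exp (x:ℂ) ≠ 0 := aux_one_add_exp_ne x
  have hslit1 : (1 + Complex.exp ((x:ℝ):ℂ)) ∈ Complex.slitPlane := by
    rw [← Complex.ofReal_exp]
    refine Or.inl ?_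
    simp only [Complex.add_re, Complex.one_re, Complex.ofReal_re]
    positivity
  have hslit2 : (Complex.exp ((x:ℝ):ℂ) + a) ∈ Complex.slitPlane := by
    rw [← Complex.ofReal_exp]; exact aux_slit_add hA (Real.exp_pos _).le
  have hsa : Complex.exp (x:ℂ) + a ≠ 0 := Complex.slitPlane_ne_zero hslit2
  have h1at : (1:ℂ) + a * (Complex.exp (x:ℂ))⁻¹ ≠ 0 := by
    rw [aux_e2 hs]
    exact div_ne_zero hsa hs
  have hu := (Complex.hasDerivAt_exp ((x:ℝ):ℂ)).const_add (1:ℂ)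
  have hlog1 := (Complex.hasDerivAt_log hslit1).comp ((x:ℝ):ℂ) hu
  have hv := (Complex.hasDerivAt_exp ((x:ℝ):ℂ)).add_const a
  have hlog2 := (Complex.hasDerivAt_log hslit2).comp ((x:ℝ):ℂ) hv
  have key := (hlog1.sub hlog2).comp_ofReal
  convert key using 1
  · rfl
  exact (aux_calc_m hs h1s hsa).symm

lemma aux_integrable (ha : a ≠ 0) (hA : a.im ≠ 0 ∨ 0 < a.re) :
    Integrable (fun x : ℝ =>
      1 / ((1 + a * (Complex.exp (x:ℂ))⁻¹) * (1 + Complex.exp (x:ℂ)))) := by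
  obtain ⟨m1, hm1, hb1⟩ := aux_lb_one_add ha hA
  obtain ⟨m2, hm2, hb2⟩ := aux_lb_add hA
  set f : ℝ → ℂ := fun x =>
      1 / ((1 + a * (Complex.exp (x:ℂ))⁻¹) * (1 + Complex.exp (x:ℂ))) with hfdef
  have hA1 : ∀ x : ℝ, m1 ≤ ‖1 + a * (Complex.exp (x:ℂ))⁻¹‖ := fun x => by
    rw [aux_exp_inv_eq]; exact hb1 _ (Real.exp_pos _).le
  have hne1 : ∀ x : ℝ, (1:ℂ) + a * (Complex.exp (x:ℂ))⁻¹ ≠ 0 := fun x => by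
    intro h0
    have := hA1 x
    rw [h0] at this
    simp only [norm_zero] at this
    linarith
  have hcexp : Continuous fun x : ℝ => Complex.exp (x:ℂ) :=
    Complex.continuous_exp.comp Complex.continuous_ofReal
  have hc : Continuous f := by
    apply Continuous.div continuous_const
    · exact (continuous_const.add (continuous_const.mul
        (hcexp.inv₀ fun x => Complex.exp_ne_zero _))).mul (continuous_const.add hcexp)
    · exact fun x => mul_ne_zero (hne1 x) (aux_one_add_exp_ne x)
  have habs : ∀ x : ℝ, ‖f x‖
      = (‖1 + a * (Complex.exp (x:ℂ))⁻¹‖ * (1 + Real.exp x))⁻¹ := fun x => by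
    rw [hfdef]
    simp only [one_div, norm_inv, norm_mul, aux_abs_one_add_exp]
  have hIoi : IntegrableOn f (Ioi (0:ℝ)) := by
    refine Integrable.mono' (g := fun x => m1⁻¹ * Real.exp (-1 * x))
      ((exp_neg_integrableOn_Ioi 0 one_pos).const_mul _)
      hc.aestronglyMeasurable.restrict ?_
    refine Eventually.of_forall fun x => ?_
    show _ ≤ m1⁻¹ * Real.exp (-1 * x)
    rw [habs x, neg_one_mul, Real.exp_neg]
    rw [mul_comm m1⁻¹ _, ← mul_inv]
    refine inv_anti₀ (by positivity) ?_
    have h1 : Real.exp x ≤ 1 + Real.exp x := by linarith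
    calc Real.exp x * m1 = m1 * Real.exp x := mul_comm _ _
    _ ≤ ‖1 + a * (Complex.exp (x:ℂ))⁻¹‖ * (1 + Real.exp x) :=
        mul_le_mul (hA1 x) h1 (Real.exp_pos _).le (norm_nonneg _)
  have hIic : IntegrableOn f (Iic (0:ℝ)) := by
    refine Integrable.mono' (g := fun x => m2⁻¹ * Real.exp x)
      ((integrableOn_exp_Iic 0).const_mul _)
      hc.aestronglyMeasurable.restrict ?_
    refine Eventually.of_forall fun x => ?_
    show _ ≤ m2⁻¹ * Real.exp x
    rw [habs x]
    have ht : ((Real.exp (-x) : ℝ) : ℂ) * ((Real.exp x : ℝ) : ℂ) = 1 := by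
      norm_cast
      rw [← Real.exp_add]
      simp
    have hsplit : (1:ℂ) + a * (Complex.exp (x:ℂ))⁻¹
        = ((Real.exp (-x) : ℝ) : ℂ) * (((Real.exp x : ℝ) : ℂ) + a) := by
      rw [aux_exp_inv_eq]
      linear_combination -ht
    have hlb : Real.exp (-x) * m2 ≤ ‖1 + a * (Complex.exp (x:ℂ))⁻¹‖ := by
      rw [hsplit, norm_mul, Complex.norm_real, Real.norm_eq_abs, abs_of_pos (Real.exp_pos _)]
      exact mul_le_mul_of_nonneg_left (hb2 _ (Real.exp_pos _).le) (Real.exp_pos _).le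
    have : m2 * Real.exp (-x) * 1
        ≤ ‖1 + a * (Complex.exp (x:ℂ))⁻¹‖ * (1 + Real.exp x) := by
      refine mul_le_mul ?_ (by linarith [Real.exp_pos x]) one_pos.le (norm_nonneg _)
      rw [mul_comm]; exact hlb
    calc (‖1 + a * (Complex.exp (x:ℂ))⁻¹‖ * (1 + Real.exp x))⁻¹
        ≤ (m2 * Real.exp (-x) * 1)⁻¹ := inv_anti₀ (by positivity) this
    _ = m2⁻¹ * Real.exp x := by rw [mul_one, Real.exp_neg, mul_inv, inv_inv]
  have := hIic.union hIoi
  rw [Iic_union_Ioi] at this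
  exact integrableOn_univ.mp this

theorem stmt6 (z : ℂ) (hz : |z.im| < Real.pi) (hz0 : z ≠ 0) :
    Fk z Complex.I = z / (Complex.exp z - 1) := by
  have hA : (Complex.exp z).im ≠ 0 ∨ 0 < (Complex.exp z).re := auxA hz
  set a : ℂ := Complex.exp z with ha
  have ha0 : a ≠ 0 := Complex.exp_ne_zero z
  have hpi := Real.pi_pos
  have ha1 : a - 1 ≠ 0 := by
    intro h
    apply hz0
    have h1 : a = 1 := by linear_combination h
    rcases Complex.exp_eq_one_iff.mp h1 with ⟨n, hn⟩
    have him : z.im = n * (2 * Real.pi) := by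
      rw [hn]
      simp [Complex.mul_im, Complex.mul_re]
    rw [him] at hz
    have hn0 : n = 0 := by
      by_contra h'
      have h1n : (1:ℝ) ≤ |(n:ℝ)| := by
        rw [← Int.cast_abs]
        exact_mod_cast Int.one_le_abs h'
      rw [abs_mul, abs_of_pos (by positivity : (0:ℝ) < 2 * Real.pi)] at hz
      nlinarith
    rw [hn, hn0]
    simp
  set f : ℝ → ℂ := fun x =>
    1 / ((1 + a * (Complex.exp (x:ℂ))⁻¹) * (1 + Complex.exp (x:ℂ))) with hfdef
  have hFk : Fk z Complex.I = ∫ x : ℝ, f x := by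
    unfold Fk
    congr 1
    funext x
    rw [hfdef]
    have : z + Complex.I * Complex.I * (x:ℂ) = z - (x:ℂ) := by
      rw [Complex.I_mul_I]; ring
    rw [this, Complex.exp_sub]
    simp only [ha, div_eq_mul_inv, one_mul]
  have hint : Integrable f := aux_integrable ha0 hA
  have hint' : Integrable fun x => (a - 1) * f x := hint.const_mul _
  -- limits
  have hT : Tendsto (fun x : ℝ => (Complex.exp (x:ℂ))⁻¹) atTop (𝓝 0) := by
    have h1 : Tendsto (fun x : ℝ => Real.exp (-x)) atTop (𝓝 0) :=
      Real.tendsto_exp_atBot.comp tendsto_neg_atTop_atBot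
    have h2 : Tendsto (fun x : ℝ => ((Real.exp (-x) : ℝ) : ℂ)) atTop (𝓝 ((0:ℝ):ℂ)) :=
      (Complex.continuous_ofReal.tendsto 0).comp h1
    simpa [aux_exp_inv_eq] using h2
  have hB : Tendsto (fun x : ℝ => Complex.exp (x:ℂ)) atBot (𝓝 0) := by
    have h2 : Tendsto (fun x : ℝ => ((Real.exp x : ℝ) : ℂ)) atBot (𝓝 ((0:ℝ):ℂ)) :=
      (Complex.continuous_ofReal.tendsto 0).comp Real.tendsto_exp_atBot
    simpa [Complex.ofReal_exp] using h2
  have htp : Tendsto (fun y : ℝ => Complex.log (1 + (Complex.exp (y:ℂ))⁻¹)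
      - Complex.log (1 + a * (Complex.exp (y:ℂ))⁻¹)) atTop (𝓝 0) := by
    have l1 : Tendsto (fun x : ℝ => (1:ℂ) + (Complex.exp (x:ℂ))⁻¹) atTop (𝓝 1) := by
      simpa using tendsto_const_nhds.add hT
    have l2 : Tendsto (fun x : ℝ => (1:ℂ) + a * (Complex.exp (x:ℂ))⁻¹) atTop (𝓝 1) := by
      simpa using tendsto_const_nhds.add (hT.const_mul a)
    have := (l1.clog Complex.one_mem_slitPlane).sub (l2.clog Complex.one_mem_slitPlane)
    simpa using this
  have htm : Tendsto (fun y : ℝ => Complex.log (1 + Complex.exp (y:ℂ))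
      - Complex.log (Complex.exp (y:ℂ) + a)) atBot (𝓝 (-z)) := by
    have l3 : Tendsto (fun x : ℝ => (1:ℂ) + Complex.exp (x:ℂ)) atBot (𝓝 1) := by
      simpa using tendsto_const_nhds.add hB
    have l4 : Tendsto (fun x : ℝ => Complex.exp (x:ℂ) + a) atBot (𝓝 a) := by
      simpa using hB.add_const a
    have hza : Complex.log a = z := by
      rw [ha]
      exact Complex.log_exp (by cases abs_lt.mp hz; linarith) (abs_lt.mp hz).2.le
    have := (l3.clog Complex.one_mem_slitPlane).sub (l4.clog (Or.symm hA))
    simpa [hza] using this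
  have hIoi := integral_Ioi_of_hasDerivAt_of_tendsto' (a := (0:ℝ))
    (f' := fun x => (a - 1) * f x)
    (fun x _ => aux_hasDeriv_Hp ha0 hA x) hint'.integrableOn htp
  have hIic := integral_Iic_of_hasDerivAt_of_tendsto' (a := (0:ℝ))
    (f' := fun x => (a - 1) * f x)
    (fun x _ => aux_hasDeriv_Hm ha0 hA x) hint'.integrableOn htm
  have hsum := intervalIntegral.integral_Iic_add_Ioi (b := (0:ℝ)) (f := fun x => (a - 1) * f x)
    hint'.integrableOn hint'.integrableOn
  have hval : ∫ x : ℝ, (a - 1) * f x = z := by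
    rw [← hsum, hIic, hIoi]
    have h00 : Complex.log (1 + Complex.exp (((0:ℝ):ℂ)))
        - Complex.log (Complex.exp (((0:ℝ):ℂ)) + a)
        = Complex.log (1 + (Complex.exp (((0:ℝ):ℂ)))⁻¹)
          - Complex.log (1 + a * (Complex.exp (((0:ℝ):ℂ)))⁻¹) := by
      norm_num [Complex.exp_zero]
    show (Complex.log (1 + Complex.exp (((0:ℝ):ℂ)))
        - Complex.log (Complex.exp (((0:ℝ):ℂ)) + a) - -z)
        + ((0:ℂ) - (Complex.log (1 + (Complex.exp (((0:ℝ):ℂ)))⁻¹)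
          - Complex.log (1 + a * (Complex.exp (((0:ℝ):ℂ)))⁻¹))) = z
    rw [h00]
    ring
  rw [hFk]
  have hmul : (a - 1) * ∫ x : ℝ, f x = z := by
    rw [← integral_const_mul]
    exact hval
  rw [eq_div_iff ha1, mul_comm]
  exact hmul

end AuxStmt6

end
end
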